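/- arXiv:2407.15976 — 3 statements merged into one kernel-verified Lean document; each statement's English description precedes it below -/
import Mathlib

section
/- Let h : D → ℝ be a harmonic function on the unit disc D ⊂ ℝ² with h < 0 on D. Then |∇h(0)| ≤ 2|h(0)| (the Schwarz lemma for negative harmonic functions). -/
noncomputable section

open Metric

/-- First standard basis vector of `ℝ²`. -/
def e₁ : EuclideanSpace ℝ (Fin 2) := EuclideanSpace.single 0 1

/-- Second standard basis vector of `ℝ²`. -/
def e₂ : EuclideanSpace ℝ (Fin 2) := EuclideanSpace.single 1 1

/-- Laplacian (within a set `s`) of a map `f : ℝ² → F` at `z`: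
`Δf(z) = ∂²f/∂x²(z) + ∂²f/∂y²(z)`. -/
def lapW {F : Type*} [NormedAddCommGroup F] [NormedSpace ℝ F]
    (s : Set (EuclideanSpace ℝ (Fin 2))) (f : EuclideanSpace ℝ (Fin 2) → F)
    (z : EuclideanSpace ℝ (Fin 2)) : F :=
  iteratedFDerivWithin ℝ 2 f s z ![e₁, e₁] + iteratedFDerivWithin ℝ 2 f s z ![e₂, e₂]

/-- Euclidean Hessian of `ρ : ℝⁿ → ℝ` at `p`, as a bilinear form. -/
def hess {n : ℕ} (ρ : EuclideanSpace ℝ (Fin n) → ℝ) (p v w : EuclideanSpace ℝ (Fin n)) : ℝ :=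
  iteratedFDeriv ℝ 2 ρ p ![v, w]

open Complex

/-- Extensionality for real-linear maps on ℂ from values at 1 and I. -/
lemma clm_ext_complex {G : Type*} [NormedAddCommGroup G] [NormedSpace ℝ G] {M N : ℂ →L[ℝ] G}
    (h1 : M 1 = N 1) (hI : M I = N I) : M = N := by
  ext w
  have hw : w = (w.re : ℝ) • (1 : ℂ) + (w.im : ℝ) • I := by
    apply Complex.ext <;> simp
  rw [hw, map_add, map_add, map_smul, map_smul, map_smul, map_smul, h1, hI]

/-- A real-differentiable map satisfying the Cauchy–Riemann relation is complex-differentiable. -/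
lemma hasDerivAt_of_CR {f : ℂ → ℂ} {L : ℂ →L[ℝ] ℂ} {z : ℂ}
    (hf : HasFDerivAt f L z) (hCR : L I = L 1 * I) : HasDerivAt f (L 1) z := by
  have hres : (ContinuousLinearMap.smulRight (1 : ℂ →L[ℂ] ℂ) (L 1)).restrictScalars ℝ = L := by
    apply clm_ext_complex <;>
      simp [ContinuousLinearMap.smulRight_apply, hCR, smul_eq_mul, mul_comm]
  have h2 := (hasFDerivAt_of_restrictScalars ℝ hf hres).hasDerivAt
  simpa using h2

/-- Operator norm of a real-linear functional on ℂ. -/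
lemma norm_clm_complex (M : ℂ →L[ℝ] ℝ) : ‖M‖ = ‖(⟨M 1, M I⟩ : ℂ)‖ := by
  set c : ℂ := ⟨M 1, M I⟩ with hc
  have key : ∀ w : ℂ, M w = c.re * w.re + c.im * w.im := by
    intro w
    have hw : w = (w.re : ℝ) • (1 : ℂ) + (w.im : ℝ) • I := by
      apply Complex.ext <;> simp
    conv_lhs => rw [hw]
    rw [map_add, map_smul, map_smul]
    simp only [smul_eq_mul, hc]
    ring
  apply le_antisymm
  · apply ContinuousLinearMap.opNorm_le_bound _ (norm_nonneg c)
    intro w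
    have hMw : M w = ((starRingEnd ℂ) c * w).re := by
      rw [key]; simp [Complex.mul_re]
    rw [Real.norm_eq_abs, hMw]
    calc |((starRingEnd ℂ) c * w).re| ≤ ‖(starRingEnd ℂ) c * w‖ :=
          Complex.abs_re_le_norm _
      _ = ‖c‖ * ‖w‖ := by rw [norm_mul, Complex.norm_conj]
  · rcases eq_or_lt_of_le (norm_nonneg c) with h0 | h0
    · rw [← h0]; exact norm_nonneg M
    · have h1 := M.le_opNorm c
      have h2 : M c = ‖c‖ ^ 2 := by
        rw [key, Complex.sq_norm, Complex.normSq_apply]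
      rw [h2] at h1
      have h3 : ‖c‖ ^ 2 ≤ ‖M‖ * ‖c‖ := by
        calc ‖c‖ ^ 2 ≤ |‖c‖ ^ 2| := le_abs_self _
          _ ≤ ‖M‖ * ‖c‖ := by rw [← Real.norm_eq_abs]; exact_mod_cast h1
          _ = ‖M‖ * ‖c‖ := rfl
      nlinarith

set_option maxHeartbeats 2000000 in
/-- Schwarz lemma for negative harmonic functions: if `h` is harmonic and negative on the unit
disc `D ⊂ ℝ²`, then `|∇h(0)| ≤ 2|h(0)|`. -/
theorem stmt2 (h : EuclideanSpace ℝ (Fin 2) → ℝ)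
    (hsm : ContDiffOn ℝ 2 h (ball 0 1))
    (hharm : ∀ z ∈ ball (0 : EuclideanSpace ℝ (Fin 2)) 1, lapW (ball 0 1) h z = 0)
    (hneg : ∀ z ∈ ball (0 : EuclideanSpace ℝ (Fin 2)) 1, h z < 0) :
    ‖fderivWithin ℝ h (ball 0 1) 0‖ ≤ 2 * |h 0| := by
  classical
  set e := Complex.orthonormalBasisOneI.repr with he
  set eC := e.toContinuousLinearEquiv with heC
  set H : ℂ → ℝ := h ∘ ⇑eC with hHdef
  have enorm : ∀ z : ℂ, ‖eC z‖ = ‖z‖ := fun z => e.norm_map z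
  have hpre : (⇑eC) ⁻¹' (ball (0 : EuclideanSpace ℝ (Fin 2)) 1) = ball (0 : ℂ) 1 := by
    ext z
    simp [mem_ball, dist_zero_right, enorm]
  have he1 : eC 1 = e₁ := by
    show e 1 = e₁
    rw [he]
    ext i
    rw [Complex.orthonormalBasisOneI_repr_apply]
    fin_cases i <;> simp [e₁, EuclideanSpace.single_apply]
  have heI : eC I = e₂ := by
    show e I = e₂
    rw [he]
    ext i
    rw [Complex.orthonormalBasisOneI_repr_apply]
    fin_cases i <;> simp [e₂, EuclideanSpace.single_apply]
  -- smoothness of H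
  have HC2 : ContDiffOn ℝ 2 H (ball 0 1) := by
    rw [hHdef, ← hpre]
    exact hsm.comp_continuousLinearMap (eC : ℂ →L[ℝ] EuclideanSpace ℝ (Fin 2))
  have HCAt : ∀ z ∈ ball (0 : ℂ) 1, ContDiffAt ℝ 2 H z :=
    fun z hz => HC2.contDiffAt (isOpen_ball.mem_nhds hz)
  have hHdiffAt : ∀ z ∈ ball (0 : ℂ) 1, DifferentiableAt ℝ H z :=
    fun z hz => (HCAt z hz).differentiableAt two_ne_zero
  set u : ℂ → ℂ →L[ℝ] ℝ := fderiv ℝ H with hu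
  have hudiff : ∀ z ∈ ball (0 : ℂ) 1, DifferentiableAt ℝ u z := by
    intro z hz
    exact ((HCAt z hz).fderiv_right (m := 1) (by norm_num)).differentiableAt one_ne_zero
  have hucont : ContinuousOn u (ball (0 : ℂ) 1) := by
    have h1 := HC2.continuousOn_fderivWithin (isOpen_ball.uniqueDiffOn) one_le_two
    exact h1.congr fun z hz => (fderivWithin_of_isOpen isOpen_ball hz).symm
  -- harmonicity in terms of fderiv of fderiv
  have HH : ∀ z ∈ ball (0 : ℂ) 1,
      fderiv ℝ u z 1 1 + fderiv ℝ u z I I = 0 := by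
    intro z hz
    have hz2 : eC z ∈ ball (0 : EuclideanSpace ℝ (Fin 2)) 1 := by
      rw [← hpre] at hz; exact hz
    have t1 := eC.iteratedFDerivWithin_comp_right h
      (isOpen_ball.uniqueDiffOn) hz2 2
    rw [hpre] at t1
    have hlap := hharm (eC z) hz2
    unfold lapW at hlap
    have e11 : iteratedFDerivWithin ℝ 2 H (ball 0 1) z ![1, 1]
        = iteratedFDerivWithin ℝ 2 h (ball 0 1) (eC z) ![e₁, e₁] := by
      rw [hHdef, t1, ContinuousMultilinearMap.compContinuousLinearMap_apply]
      congr 1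
      funext i
      fin_cases i <;> simp [he1]
    have eII : iteratedFDerivWithin ℝ 2 H (ball 0 1) z ![I, I]
        = iteratedFDerivWithin ℝ 2 h (ball 0 1) (eC z) ![e₂, e₂] := by
      rw [hHdef, t1, ContinuousMultilinearMap.compContinuousLinearMap_apply]
      congr 1
      funext i
      fin_cases i <;> simp [heI]
    have hsum : iteratedFDerivWithin ℝ 2 H (ball 0 1) z ![1, 1]
        + iteratedFDerivWithin ℝ 2 H (ball 0 1) z ![I, I] = 0 := by
      rw [e11, eII]; exact hlap
    rw [iteratedFDerivWithin_of_isOpen 2 isOpen_ball hz, iteratedFDeriv_two_apply,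
      iteratedFDeriv_two_apply] at hsum
    simpa using hsum
  have hsymm : ∀ z ∈ ball (0 : ℂ) 1, ∀ v w, fderiv ℝ u z v w = fderiv ℝ u z w v := by
    intro z hz
    exact (HCAt z hz).isSymmSndFDerivAt (by simp)
  -- the holomorphic derivative candidate
  set g : ℂ → ℂ := fun z => ((u z 1 : ℝ) : ℂ) - ((u z I : ℝ) : ℂ) * I with hg
  have hgdiff : ∀ z ∈ ball (0 : ℂ) 1, DifferentiableAt ℂ g z := by
    intro z hz
    set U := fderiv ℝ u z with hU
    set φ : (ℂ →L[ℝ] ℝ) →L[ℝ] ℂ :=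
      Complex.ofRealCLM.comp (ContinuousLinearMap.apply ℝ ℝ (1 : ℂ)) -
        (ContinuousLinearMap.apply ℝ ℝ (I : ℂ)).smulRight I with hφ
    have hφval : ∀ M : ℂ →L[ℝ] ℝ, φ M = ((M 1 : ℝ) : ℂ) - ((M I : ℝ) : ℂ) * I := by
      intro M
      simp [hφ, ContinuousLinearMap.smulRight_apply, ContinuousLinearMap.apply_apply,
        Complex.real_smul]
    have hgφ : g = fun w => φ (u w) := by
      funext w
      rw [hφval, hg]
    have hUd : HasFDerivAt u U z := (hudiff z hz).hasFDerivAt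
    have hfd : HasFDerivAt g (φ.comp U) z := by
      rw [hgφ]
      exact φ.hasFDerivAt.comp z hUd
    have hcr : (φ.comp U) I = (φ.comp U) 1 * I := by
      have h1 := hsymm z hz 1 I
      have h2 := HH z hz
      simp only [ContinuousLinearMap.comp_apply, hφval]
      apply Complex.ext <;>
        simp only [Complex.sub_re, Complex.sub_im, Complex.mul_re, Complex.mul_im,
          Complex.ofReal_re, Complex.ofReal_im, Complex.I_re, Complex.I_im, Complex.mul_I_re,
          Complex.mul_I_im] <;>
        simp only [← hU] at h1 h2 ⊢ <;> linarith
    exact (hasDerivAt_of_CR hfd hcr).differentiableAt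
  have hgOn : DifferentiableOn ℂ g (ball 0 1) :=
    fun z hz => (hgdiff z hz).differentiableWithinAt
  have hgcont : ContinuousOn g (ball (0 : ℂ) 1) := hgOn.continuousOn
  have hgderivcont : ContinuousOn (deriv g) (ball (0 : ℂ) 1) :=
    ((hgOn.analyticOnNhd isOpen_ball).deriv).continuousOn
  have hgderiv : ∀ z ∈ ball (0 : ℂ) 1, HasDerivAt g (deriv g z) z :=
    fun z hz => (hgdiff z hz).hasDerivAt
  -- primitive
  set F : ℂ → ℂ := fun z => ((H 0 : ℝ) : ℂ) + ∫ t in (0:ℝ)..1, z * g ((t : ℝ) * z) with hF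
  have hFderiv : ∀ z₀ ∈ ball (0 : ℂ) 1, HasDerivAt F (g z₀) z₀ := by
    intro z₀ hz₀
    have hz₀n : ‖z₀‖ < 1 := by simpa [mem_ball, dist_zero_right] using hz₀
    set r : ℝ := (1 + ‖z₀‖) / 2 with hr
    have hr1 : r < 1 := by rw [hr]; linarith
    have hr0 : 0 ≤ r := by positivity
    set ε : ℝ := (1 - ‖z₀‖) / 2 with hε
    have hε0 : 0 < ε := by rw [hε]; linarith
    have hballs : ∀ x ∈ ball z₀ ε, ‖x‖ ≤ r := by
      intro x hx
      have h1 : ‖x - z₀‖ < ε := mem_ball_iff_norm.mp hx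
      have h2 : ‖x‖ - ‖z₀‖ ≤ ‖x - z₀‖ := norm_sub_norm_le x z₀
      rw [hr]; rw [hε] at h1; linarith
    have hrball : closedBall (0 : ℂ) r ⊆ ball 0 1 := closedBall_subset_ball hr1
    obtain ⟨M₁, hM₁⟩ :=
      (isCompact_closedBall (0 : ℂ) r).exists_bound_of_continuousOn (hgcont.mono hrball)
    obtain ⟨M₂, hM₂⟩ :=
      (isCompact_closedBall (0 : ℂ) r).exists_bound_of_continuousOn (hgderivcont.mono hrball)
    have h0mem : (0 : ℂ) ∈ closedBall (0 : ℂ) r := by simp [hr0]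
    have hM₁0 : 0 ≤ M₁ := le_trans (norm_nonneg _) (hM₁ 0 h0mem)
    have hM₂0 : 0 ≤ M₂ := le_trans (norm_nonneg _) (hM₂ 0 h0mem)
    have hmem : ∀ t : ℝ, |t| ≤ 1 → ∀ x : ℂ, ‖x‖ ≤ r → ((t : ℂ) * x) ∈ closedBall (0 : ℂ) r := by
      intro t ht x hx
      rw [mem_closedBall, dist_zero_right, norm_mul, Complex.norm_real, Real.norm_eq_abs]
      calc |t| * ‖x‖ ≤ 1 * r := by
            apply mul_le_mul ht hx (norm_nonneg _) zero_le_one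
        _ = r := one_mul r
    have habs : ∀ t : ℝ, t ∈ Set.uIoc (0:ℝ) 1 → |t| ≤ 1 := by
      intro t ht
      rw [Set.uIoc_of_le zero_le_one] at ht
      rw [abs_le]; constructor <;> [linarith [ht.1]; exact ht.2]
    have habs' : ∀ t : ℝ, t ∈ Set.uIcc (0:ℝ) 1 → |t| ≤ 1 := by
      intro t ht
      rw [Set.uIcc_of_le zero_le_one] at ht
      rw [abs_le]; constructor <;> [linarith [ht.1]; exact ht.2]
    -- continuity in t of the integrand for ‖x‖ ≤ r
    have hcont1 : ∀ x : ℂ, ‖x‖ ≤ r → ∀ s : Set ℝ, (∀ t ∈ s, |t| ≤ 1) →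
        ContinuousOn (fun t : ℝ => x * g ((t : ℂ) * x)) s := by
      intro x hx s hs
      apply ContinuousOn.mul continuousOn_const
      apply hgcont.comp ((Complex.continuous_ofReal.mul continuous_const).continuousOn)
      intro t ht
      exact hrball (hmem t (hs t ht) x hx)
    set G' : ℂ → ℝ → ℂ :=
      fun x t => 1 * g ((t : ℂ) * x) + x * (deriv g ((t : ℂ) * x) * (t : ℂ)) with hG'
    have hmeas : ∀ᶠ x in nhds z₀, MeasureTheory.AEStronglyMeasurable
        (fun t : ℝ => x * g ((t : ℂ) * x)) (MeasureTheory.volume.restrict (Set.uIoc (0:ℝ) 1)) := by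
      filter_upwards [ball_mem_nhds z₀ hε0] with x hx
      exact ((hcont1 x (hballs x hx) _ habs).aestronglyMeasurable measurableSet_uIoc)
    have hint : IntervalIntegrable (fun t : ℝ => z₀ * g ((t : ℂ) * z₀))
        MeasureTheory.volume 0 1 := by
      apply ContinuousOn.intervalIntegrable
      exact hcont1 z₀ (by rw [hr]; linarith) _ habs'
    have hmeas' : MeasureTheory.AEStronglyMeasurable (G' z₀)
        (MeasureTheory.volume.restrict (Set.uIoc (0:ℝ) 1)) := by
      apply ContinuousOn.aestronglyMeasurable _ measurableSet_uIoc
      have hz₀r : ‖z₀‖ ≤ r := by rw [hr]; linarith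
      apply ContinuousOn.add
      · apply ContinuousOn.mul continuousOn_const
        apply hgcont.comp ((Complex.continuous_ofReal.mul continuous_const).continuousOn)
        intro t ht
        exact hrball (hmem t (habs t ht) z₀ hz₀r)
      · apply ContinuousOn.mul continuousOn_const
        apply ContinuousOn.mul _ (Complex.continuous_ofReal.continuousOn)
        apply hgderivcont.comp ((Complex.continuous_ofReal.mul continuous_const).continuousOn)
        intro t ht
        exact hrball (hmem t (habs t ht) z₀ hz₀r)
    have hbound : ∀ᵐ t ∂MeasureTheory.volume, t ∈ Set.uIoc (0:ℝ) 1 →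
        ∀ x ∈ ball z₀ ε, ‖G' x t‖ ≤ M₁ + M₂ := by
      apply Filter.Eventually.of_forall
      intro t ht x hx
      have hxr := hballs x hx
      have htx := hmem t (habs t ht) x hxr
      have hb1 : ‖g ((t:ℂ) * x)‖ ≤ M₁ := hM₁ _ htx
      have hb2 : ‖deriv g ((t:ℂ) * x)‖ ≤ M₂ := hM₂ _ htx
      rw [hG']
      calc ‖1 * g ((t:ℂ) * x) + x * (deriv g ((t:ℂ) * x) * (t:ℂ))‖
          ≤ ‖1 * g ((t:ℂ) * x)‖ + ‖x * (deriv g ((t:ℂ) * x) * (t:ℂ))‖ := norm_add_le _ _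
        _ = ‖g ((t:ℂ) * x)‖ + ‖x‖ * (‖deriv g ((t:ℂ) * x)‖ * |t|) := by
            rw [one_mul, norm_mul, norm_mul, Complex.norm_real, Real.norm_eq_abs]
        _ ≤ M₁ + M₂ := by
            have h3 : ‖x‖ * (‖deriv g ((t:ℂ) * x)‖ * |t|) ≤ M₂ := by
              have hx1 : ‖x‖ ≤ 1 := le_trans hxr hr1.le
              have ht1 : |t| ≤ 1 := habs t ht
              have hd0 : 0 ≤ ‖deriv g ((t:ℂ) * x)‖ := norm_nonneg _
              calc ‖x‖ * (‖deriv g ((t:ℂ) * x)‖ * |t|)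
                  ≤ 1 * (‖deriv g ((t:ℂ) * x)‖ * |t|) :=
                    mul_le_mul_of_nonneg_right hx1 (by positivity)
                _ = ‖deriv g ((t:ℂ) * x)‖ * |t| := one_mul _
                _ ≤ ‖deriv g ((t:ℂ) * x)‖ * 1 := mul_le_mul_of_nonneg_left ht1 hd0
                _ = ‖deriv g ((t:ℂ) * x)‖ := mul_one _
                _ ≤ M₂ := hb2
            linarith
    have hdiff : ∀ᵐ t ∂MeasureTheory.volume, t ∈ Set.uIoc (0:ℝ) 1 →
        ∀ x ∈ ball z₀ ε, HasDerivAt (fun x => x * g ((t : ℂ) * x)) (G' x t) x := by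
      apply Filter.Eventually.of_forall
      intro t ht x hx
      have hxr := hballs x hx
      have htx : (t:ℂ) * x ∈ ball (0:ℂ) 1 := hrball (hmem t (habs t ht) x hxr)
      have hinner : HasDerivAt (fun y : ℂ => g ((t:ℂ) * y)) (deriv g ((t:ℂ) * x) * (t:ℂ)) x := by
        have hlin : HasDerivAt (fun y : ℂ => (t:ℂ) * y) (t:ℂ) x := by
          simpa using (hasDerivAt_id x).const_mul (t:ℂ)
        exact (hgderiv _ htx).comp x hlin
      simpa [hG'] using (hasDerivAt_id x).fun_mul hinner
    have key := intervalIntegral.hasDerivAt_integral_of_dominated_loc_of_deriv_le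
      (F := fun x t => x * g ((t : ℂ) * x)) (F' := G') (x₀ := z₀) (a := 0) (b := 1)
      (bound := fun _ => M₁ + M₂) (μ := MeasureTheory.volume) (ball_mem_nhds z₀ hε0)
      hmeas hint hmeas' hbound intervalIntegrable_const hdiff
    -- now compute the integral of G' z₀
    obtain ⟨hGint, hkey⟩ := key
    have hftc : (∫ t in (0:ℝ)..1, G' z₀ t) = g z₀ := by
      have hder : ∀ t ∈ Set.uIcc (0:ℝ) 1,
          HasDerivAt (fun s : ℝ => (s : ℂ) * g ((s : ℂ) * z₀)) (G' z₀ t) t := by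
        intro t ht
        have htz : (t:ℂ) * z₀ ∈ ball (0:ℂ) 1 := by
          apply hrball (hmem t (habs' t ht) z₀ (by rw [hr]; linarith))
        have hc : HasDerivAt (fun w : ℂ => w * g (w * z₀))
            (1 * g ((t:ℂ) * z₀) + (t:ℂ) * (deriv g ((t:ℂ) * z₀) * z₀)) (t:ℂ) := by
          have hinner : HasDerivAt (fun w : ℂ => g (w * z₀)) (deriv g ((t:ℂ) * z₀) * z₀) (t:ℂ) := by
            have hlin : HasDerivAt (fun w : ℂ => w * z₀) z₀ (t:ℂ) := hasDerivAt_mul_const z₀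
            exact (hgderiv _ htz).comp (t:ℂ) hlin
          exact (hasDerivAt_id _).mul hinner
        have := hc.comp_ofReal
        convert this using 1
        rw [hG']; ring
      have := intervalIntegral.integral_eq_sub_of_hasDerivAt hder hGint
      rw [this]
      push_cast
      simp
    rw [hF]
    have : HasDerivAt (fun z => ((H 0 : ℝ) : ℂ) + ∫ t in (0:ℝ)..1, z * g ((t : ℝ) * z)) (g z₀) z₀ := by
      rw [← hftc]
      exact hkey.const_add _
    exact this
  have hFre : ∀ z ∈ ball (0 : ℂ) 1, (F z).re = H z := by
    intro z hz
    have hz1 : ‖z‖ < 1 := by simpa [mem_ball, dist_zero_right] using hz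
    have hmemt : ∀ t ∈ Set.uIcc (0:ℝ) 1, ((t:ℂ) * z) ∈ ball (0:ℂ) 1 := by
      intro t ht
      rw [Set.uIcc_of_le zero_le_one] at ht
      rw [mem_ball, dist_zero_right, norm_mul, Complex.norm_real, Real.norm_eq_abs]
      have ht1 : |t| ≤ 1 := abs_le.mpr ⟨by linarith [ht.1], ht.2⟩
      calc |t| * ‖z‖ ≤ 1 * ‖z‖ := mul_le_mul_of_nonneg_right ht1 (norm_nonneg _)
        _ = ‖z‖ := one_mul _
        _ < 1 := hz1
    have hψ : ∀ t ∈ Set.uIcc (0:ℝ) 1,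
        HasDerivAt (fun s : ℝ => H ((s:ℂ) * z)) (u ((t:ℂ) * z) z) t := by
      intro t ht
      have h1 : HasFDerivAt H (u ((t:ℂ) * z)) ((t:ℂ) * z) :=
        (hHdiffAt _ (hmemt t ht)).hasFDerivAt
      have h2 : HasDerivAt (fun s : ℝ => ((s:ℂ) * z)) z t := by
        have h3 := (hasDerivAt_id t).smul_const z
        simp only [one_smul] at h3
        have h4 : (fun s : ℝ => (s:ℂ) * z) = fun s : ℝ => s • z := by
          funext s; rw [Complex.real_smul]
        rw [h4]
        exact h3
      exact h1.comp_hasDerivAt t h2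
    have hcontu : ContinuousOn (fun t : ℝ => u ((t:ℂ) * z) z) (Set.uIcc (0:ℝ) 1) := by
      have hc : ContinuousOn (fun t : ℝ => u ((t:ℂ) * z)) (Set.uIcc (0:ℝ) 1) :=
        hucont.comp ((Complex.continuous_ofReal.mul continuous_const).continuousOn) hmemt
      exact hc.clm_apply continuousOn_const
    have hint : IntervalIntegrable (fun t : ℝ => u ((t:ℂ) * z) z) MeasureTheory.volume 0 1 :=
      hcontu.intervalIntegrable
    have hftc := intervalIntegral.integral_eq_sub_of_hasDerivAt hψ hint
    have hid : ∀ w : ℂ, (z * g w).re = u w z := by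
      intro w
      have hw : z = (z.re : ℝ) • (1:ℂ) + (z.im : ℝ) • I := by apply Complex.ext <;> simp
      rw [hg]
      conv_rhs => rw [hw]
      rw [map_add, map_smul, map_smul]
      simp only [Complex.mul_re, Complex.sub_re, Complex.sub_im, Complex.ofReal_re,
        Complex.ofReal_im, Complex.mul_I_re, Complex.mul_I_im, Complex.I_re, Complex.I_im,
        smul_eq_mul]
      ring
    have hint2 : IntervalIntegrable (fun t : ℝ => z * g ((t:ℂ) * z)) MeasureTheory.volume 0 1 := by
      apply ContinuousOn.intervalIntegrable
      apply ContinuousOn.mul continuousOn_const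
      exact hgcont.comp ((Complex.continuous_ofReal.mul continuous_const).continuousOn) hmemt
    have hre := Complex.reCLM.intervalIntegral_comp_comm hint2
    calc (F z).re = H 0 + Complex.reCLM (∫ t in (0:ℝ)..1, z * g ((t:ℂ) * z)) := by
          rw [hF]; simp
      _ = H 0 + ∫ t in (0:ℝ)..1, Complex.reCLM (z * g ((t:ℂ) * z)) := by rw [hre]
      _ = H 0 + ∫ t in (0:ℝ)..1, u ((t:ℂ) * z) z := by
          congr 1
          apply intervalIntegral.integral_congr
          intro t _
          exact hid _
      _ = H 0 + (H (((1:ℝ):ℂ) * z) - H (((0:ℝ):ℂ) * z)) := by rw [hftc]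
      _ = H z := by push_cast; rw [one_mul, zero_mul]; ring
  have hF0 : F 0 = ((H 0 : ℝ) : ℂ) := by
    simp [hF]
  -- Möbius transform and Schwarz lemma
  have hH0 : H 0 < 0 := by
    have h0 : (0 : ℂ) ∈ ball (0 : ℂ) 1 := mem_ball_self one_pos
    have := hneg (eC 0) (by rw [← hpre] at h0; exact h0)
    simpa [hHdef] using this
  have hgbound : ‖g 0‖ ≤ 2 * |H 0| := by
    have h0 : (0:ℂ) ∈ ball (0:ℂ) 1 := mem_ball_self one_pos
    have hHz : ∀ z ∈ ball (0:ℂ) 1, H z < 0 := by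
      intro z hz
      have hz2 : eC z ∈ ball (0 : EuclideanSpace ℝ (Fin 2)) 1 := by
        rw [← hpre] at hz; exact hz
      exact hneg _ hz2
    set c0 : ℂ := ((H 0 : ℝ) : ℂ) with hc0
    have hden : ∀ z ∈ ball (0:ℂ) 1, F z + c0 ≠ 0 := by
      intro z hz hzero
      have h1 : (F z + c0).re = H z + H 0 := by
        rw [Complex.add_re, hFre z hz, hc0, Complex.ofReal_re]
      rw [hzero] at h1
      simp only [Complex.zero_re] at h1
      nlinarith [hHz z hz, hH0]
    set φf : ℂ → ℂ := fun z => (F z - F 0) / (F z + c0) with hφf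
    have hFdiffOn : DifferentiableOn ℂ F (ball 0 1) :=
      fun z hz => (hFderiv z hz).differentiableAt.differentiableWithinAt
    have hφdiff : DifferentiableOn ℂ φf (ball 0 1) :=
      DifferentiableOn.div (hFdiffOn.sub_const _) (hFdiffOn.add_const _) hden
    have hφmaps : Set.MapsTo φf (ball 0 1) (ball 0 1) := by
      intro z hz
      have h1 : ‖F z - F 0‖ < ‖F z + c0‖ := by
        rw [hF0, Complex.norm_def, Complex.norm_def]
        apply Real.sqrt_lt_sqrt (Complex.normSq_nonneg _)
        rw [Complex.normSq_apply, Complex.normSq_apply]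
        simp only [Complex.sub_re, Complex.sub_im, Complex.add_re, Complex.add_im, hc0,
          Complex.ofReal_re, Complex.ofReal_im]
        have h2 := hFre z hz
        have h3 := hHz z hz
        have hp : 0 < (F z).re * H 0 := by
          rw [h2]; exact mul_pos_of_neg_of_neg h3 hH0
        nlinarith [hp]
      rw [mem_ball, dist_zero_right]
      show ‖(F z - F 0) / (F z + c0)‖ < 1
      have hdpos : 0 < ‖F z + c0‖ := norm_pos_iff.mpr (hden z hz)
      rw [norm_div, div_lt_one hdpos]
      exact h1
    have hφ0 : φf 0 = 0 := by rw [hφf]; simp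
    have hschwarz := Complex.norm_deriv_le_one_of_mapsTo_ball hφdiff
        (by rw [hφ0]; exact hφmaps.mono_right ball_subset_closedBall) one_pos
    have hc0ne : c0 ≠ 0 := by
      rw [hc0]
      exact Complex.ofReal_ne_zero.mpr hH0.ne
    have hdφ : HasDerivAt φf (g 0 / (2 * c0)) 0 := by
      have hn : HasDerivAt (fun z => F z - F 0) (g 0) 0 := (hFderiv 0 h0).sub_const _
      have hd : HasDerivAt (fun z => F z + c0) (g 0) 0 := (hFderiv 0 h0).add_const _
      have hden0 : F 0 + c0 ≠ 0 := hden 0 h0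
      have hq := hn.div hd hden0
      rw [hφf]
      refine hq.congr_deriv ?_
      rw [hF0]
      have h2c0 : c0 + c0 ≠ 0 := by
        rw [hF0] at hden0; exact hden0
      field_simp
      ring
    rw [hdφ.deriv, norm_div] at hschwarz
    have h2c : ‖2 * c0‖ = 2 * |H 0| := by
      rw [norm_mul, hc0, Complex.norm_real, Real.norm_eq_abs, Complex.norm_two]
    rw [h2c] at hschwarz
    have hpos : 0 < 2 * |H 0| := by
      have := abs_pos.mpr hH0.ne
      linarith
    calc ‖g 0‖ = ‖g 0‖ / (2*|H 0|) * (2*|H 0|) := by rw [div_mul_cancel₀ _ hpos.ne']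
      _ ≤ 1 * (2*|H 0|) := mul_le_mul_of_nonneg_right hschwarz hpos.le
      _ = 2*|H 0| := one_mul _
  -- assembling
  have h0mem2 : (0 : EuclideanSpace ℝ (Fin 2)) ∈ ball (0 : EuclideanSpace ℝ (Fin 2)) 1 :=
    mem_ball_self one_pos
  have hhdiff : DifferentiableAt ℝ h (0 : EuclideanSpace ℝ (Fin 2)) :=
    (hsm.contDiffAt (isOpen_ball.mem_nhds h0mem2)).differentiableAt two_ne_zero
  have heq1 : fderivWithin ℝ h (ball 0 1) 0 = fderiv ℝ h 0 :=
    fderivWithin_of_isOpen isOpen_ball h0mem2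
  set L : EuclideanSpace ℝ (Fin 2) →L[ℝ] ℝ := fderiv ℝ h 0 with hL
  have hcomp : HasFDerivAt H (L.comp (eC : ℂ →L[ℝ] EuclideanSpace ℝ (Fin 2))) 0 := by
    have h1 : HasFDerivAt h L (eC 0) := by
      rw [map_zero]; exact hhdiff.hasFDerivAt
    exact h1.comp 0 eC.hasFDerivAt
  have hu0 : u 0 = L.comp (eC : ℂ →L[ℝ] EuclideanSpace ℝ (Fin 2)) := by
    rw [hu]; exact hcomp.fderiv
  have hnorm1 : ‖L.comp (eC : ℂ →L[ℝ] EuclideanSpace ℝ (Fin 2))‖ = ‖L‖ :=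
    L.opNorm_comp_linearIsometryEquiv e
  have hnormu : ‖u 0‖ = ‖g 0‖ := by
    rw [norm_clm_complex (u 0), hg]
    simp only
    rw [Complex.norm_def, Complex.norm_def]
    congr 1
    simp only [Complex.normSq_apply, Complex.sub_re, Complex.sub_im, Complex.ofReal_re,
      Complex.ofReal_im, Complex.mul_I_re, Complex.mul_I_im]
    ring
  have hH0h : H 0 = h 0 := by
    rw [hHdef]
    show h (eC 0) = h 0
    rw [map_zero]
  rw [heq1, ← hnorm1, ← hu0, hnormu, ← hH0h]
  exact hgbound
end
end

section
/- Let u : D → ℝ be a C² function on the unit disc D ⊂ ℝ² with u < 0 on D, and suppose |Δu(ζ)| ≤ A·|u(0)| for all ζ ∈ D, for some constant A > 0. Then there is a constant C (depending only on A, not on u) such that |∇u(0)| ≤ C·|u(0)|. -/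
noncomputable section

open Metric

namespace SLaux

open Real Set MeasureTheory intervalIntegral

abbrev E2 := EuclideanSpace ℝ (Fin 2)

/-- radial unit vector -/
def vv (θ : ℝ) : E2 := Real.cos θ • e₁ + Real.sin θ • e₂
/-- tangential unit vector -/
def ww (θ : ℝ) : E2 := (-Real.sin θ) • e₁ + Real.cos θ • e₂
/-- polar coordinates curve -/
def γ (r θ : ℝ) : E2 := r • vv θ

lemma e₁_apply (j : Fin 2) : e₁ j = if j = 0 then 1 else 0 := by
  simp [e₁, EuclideanSpace.single_apply, eq_comm]

lemma e₂_apply (j : Fin 2) : e₂ j = if j = 1 then 1 else 0 := by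
  simp [e₂, EuclideanSpace.single_apply, eq_comm]

lemma norm_vv (θ : ℝ) : ‖vv θ‖ = 1 := by
  have : ‖vv θ‖ = Real.sqrt (∑ i : Fin 2, vv θ i ^ 2) := by
    rw [EuclideanSpace.norm_eq]
    congr 1
    refine Finset.sum_congr rfl fun i _ => ?_
    rw [Real.norm_eq_abs, sq_abs]
  rw [this, Fin.sum_univ_two]
  have h0 : vv θ 0 = Real.cos θ := by simp [vv, e₁_apply, e₂_apply]
  have h1 : vv θ 1 = Real.sin θ := by simp [vv, e₁_apply, e₂_apply]
  rw [h0, h1]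
  rw [show Real.cos θ ^ 2 + Real.sin θ ^ 2 = 1 by rw [add_comm]; exact Real.sin_sq_add_cos_sq θ]
  exact Real.sqrt_one

lemma cont_vv : Continuous vv := by
  unfold vv; fun_prop

lemma cont_ww : Continuous ww := by
  unfold ww; fun_prop

lemma hasDerivAt_vv (θ : ℝ) : HasDerivAt vv (ww θ) θ := by
  have h1 : HasDerivAt (fun t => Real.cos t • e₁) ((-Real.sin θ) • e₁) θ :=
    (Real.hasDerivAt_cos θ).smul_const e₁
  have h2 : HasDerivAt (fun t => Real.sin t • e₂) (Real.cos θ • e₂) θ :=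
    (Real.hasDerivAt_sin θ).smul_const e₂
  exact h1.add h2

lemma hasDerivAt_ww (θ : ℝ) : HasDerivAt ww (-vv θ) θ := by
  have h1 : HasDerivAt (fun t => (-Real.sin t) • e₁) ((-Real.cos θ) • e₁) θ := by
    have := ((Real.hasDerivAt_sin θ).neg).smul_const e₁
    simpa using this
  have h2 : HasDerivAt (fun t => Real.cos t • e₂) ((-Real.sin θ) • e₂) θ :=
    (Real.hasDerivAt_cos θ).smul_const e₂
  have := h1.add h2
  refine HasDerivAt.congr_deriv (f := ww) this ?_
  simp [vv, neg_add]
  abel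

lemma vv_per : vv (2 * Real.pi) = vv 0 := by
  simp [vv]

lemma ww_per : ww (2 * Real.pi) = ww 0 := by
  simp [ww]

lemma γ_mem {R r : ℝ} (hR : R < 1) (hr : |r| ≤ R) (θ : ℝ) : γ r θ ∈ ball (0 : E2) 1 := by
  have : ‖γ r θ‖ = |r| := by
    rw [γ, norm_smul, norm_vv, mul_one, Real.norm_eq_abs]
  rw [mem_ball, dist_zero_right, this]
  linarith

lemma hasDerivAt_γ_r (r θ : ℝ) : HasDerivAt (fun t => γ t θ) (vv θ) r := by
  have := (hasDerivAt_id r).smul_const (vv θ)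
  simpa [γ] using this

lemma hasDerivAt_γ_θ (r θ : ℝ) : HasDerivAt (fun t => γ r t) (r • ww θ) θ := by
  exact (hasDerivAt_vv θ).const_smul r

lemma cont_γ : Continuous (fun p : ℝ × ℝ => γ p.1 p.2) := by
  unfold γ
  exact continuous_fst.smul (cont_vv.comp continuous_snd)

lemma γ_per (r : ℝ) : γ r (2 * Real.pi) = γ r 0 := by
  simp [γ, vv_per]

/-- operator norm bound via the two coordinates -/
lemma opnorm_le (D : E2 →L[ℝ] ℝ) : ‖D‖ ≤ |D e₁| + |D e₂| := by
  refine ContinuousLinearMap.opNorm_le_bound D (by positivity) fun x => ?_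
  have hx : x = x 0 • e₁ + x 1 • e₂ := by
    ext j
    fin_cases j <;> simp [e₁_apply, e₂_apply]
  have hxi : ∀ i : Fin 2, |x i| ≤ ‖x‖ := by
    intro i
    rw [EuclideanSpace.norm_eq]
    have h1 : |x i| = Real.sqrt (|x i| ^ 2) := by
      rw [Real.sqrt_sq (abs_nonneg _)]
    rw [h1]
    apply Real.sqrt_le_sqrt
    have := Finset.single_le_sum (f := fun j => |x j| ^ 2) (fun j _ => by positivity)
      (Finset.mem_univ i)
    simpa using this
  calc ‖D x‖ = |x 0 * D e₁ + x 1 * D e₂| := by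
        rw [show D x = x 0 * D e₁ + x 1 * D e₂ by
          conv_lhs => rw [hx]
          simp [smul_eq_mul]]
        rfl
    _ ≤ |x 0| * |D e₁| + |x 1| * |D e₂| := by
        refine (abs_add_le _ _).trans ?_
        simp [abs_mul]
    _ ≤ ‖x‖ * |D e₁| + ‖x‖ * |D e₂| := by
        gcongr <;> [exact hxi 0; exact hxi 1]
    _ = (|D e₁| + |D e₂|) * ‖x‖ := by ring

end SLaux


namespace SLaux

open Real Set MeasureTheory intervalIntegral

variable {u : E2 → ℝ}

lemma γ_mem' {r : ℝ} (hr : |r| < 1) (θ : ℝ) : γ r θ ∈ ball (0 : E2) 1 := by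
  have : ‖γ r θ‖ = |r| := by
    rw [γ, norm_smul, norm_vv, mul_one, Real.norm_eq_abs]
  rw [mem_ball, dist_zero_right, this]; exact hr

lemma contDiffOn_Du (hu : ContDiffOn ℝ 2 u (ball 0 1)) :
    ContDiffOn ℝ 1 (fderiv ℝ u) (ball (0:E2) 1) := by
  refine (hu.fderivWithin (isOpen_ball.uniqueDiffOn) (by norm_num)).congr fun x hx => ?_
  exact (fderivWithin_of_isOpen isOpen_ball hx).symm

lemma contOn_Du (hu : ContDiffOn ℝ 2 u (ball 0 1)) :
    ContinuousOn (fderiv ℝ u) (ball (0:E2) 1) := (contDiffOn_Du hu).continuousOn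

lemma contOn_Hu (hu : ContDiffOn ℝ 2 u (ball 0 1)) :
    ContinuousOn (fderiv ℝ (fderiv ℝ u)) (ball (0:E2) 1) := by
  refine ((contDiffOn_Du hu).continuousOn_fderivWithin (isOpen_ball.uniqueDiffOn)
    (le_refl 1)).congr fun x hx => ?_
  exact (fderivWithin_of_isOpen isOpen_ball hx).symm

lemma hfd_u (hu : ContDiffOn ℝ 2 u (ball 0 1)) {z : E2} (hz : z ∈ ball (0:E2) 1) :
    HasFDerivAt u (fderiv ℝ u z) z :=
  ((hu.contDiffAt (isOpen_ball.mem_nhds hz)).differentiableAt (by norm_num)).hasFDerivAt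

lemma hfd_Du (hu : ContDiffOn ℝ 2 u (ball 0 1)) {z : E2} (hz : z ∈ ball (0:E2) 1) :
    HasFDerivAt (fderiv ℝ u) (fderiv ℝ (fderiv ℝ u) z) z :=
  (((hu.contDiffAt (isOpen_ball.mem_nhds hz)).fderiv_right (m := 1)
    (by norm_num)).differentiableAt (by norm_num)).hasFDerivAt

lemma lap_eq (hu : ContDiffOn ℝ 2 u (ball 0 1)) {z : E2} (hz : z ∈ ball (0:E2) 1) :
    lapW (ball 0 1) u z
      = fderiv ℝ (fderiv ℝ u) z e₁ e₁ + fderiv ℝ (fderiv ℝ u) z e₂ e₂ := by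
  have hEq : Set.EqOn (fderivWithin ℝ u (ball 0 1)) (fderiv ℝ u) (ball (0:E2) 1) :=
    fun x hx => fderivWithin_of_isOpen isOpen_ball hx
  have key : fderivWithin ℝ (fderivWithin ℝ u (ball 0 1)) (ball 0 1) z
      = fderiv ℝ (fderiv ℝ u) z := by
    rw [fderivWithin_congr hEq (hEq hz), fderivWithin_of_isOpen isOpen_ball hz]
  rw [lapW, iteratedFDerivWithin_two_apply u (isOpen_ball.uniqueDiffOn) hz,
    iteratedFDerivWithin_two_apply u (isOpen_ball.uniqueDiffOn) hz, key]
  simp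

lemma rot (H : E2 →L[ℝ] E2 →L[ℝ] ℝ) (θ : ℝ) :
    H (vv θ) (vv θ) + H (ww θ) (ww θ) = H e₁ e₁ + H e₂ e₂ := by
  have h := Real.sin_sq_add_cos_sq θ
  simp only [vv, ww, map_add, _root_.map_smul, ContinuousLinearMap.add_apply,
    ContinuousLinearMap.smul_apply, ContinuousLinearMap.coe_smul', Pi.smul_apply, smul_eq_mul]
  linear_combination (H e₁ e₁) * h + (H e₂ e₂) * h

/-- `u` along the polar curve -/
def F0 (u : E2 → ℝ) (r θ : ℝ) : ℝ := u (γ r θ)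
/-- radial derivative -/
def F1 (u : E2 → ℝ) (r θ : ℝ) : ℝ := fderiv ℝ u (γ r θ) (vv θ)
/-- second radial derivative -/
def F2 (u : E2 → ℝ) (r θ : ℝ) : ℝ := fderiv ℝ (fderiv ℝ u) (γ r θ) (vv θ) (vv θ)
/-- tangential Hessian -/
def W2 (u : E2 → ℝ) (r θ : ℝ) : ℝ := fderiv ℝ (fderiv ℝ u) (γ r θ) (ww θ) (ww θ)
/-- angular derivative -/
def GG (u : E2 → ℝ) (r θ : ℝ) : ℝ := r * fderiv ℝ u (γ r θ) (ww θ)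

lemma hF0r (hu : ContDiffOn ℝ 2 u (ball 0 1)) {r : ℝ} (hr : |r| < 1) (θ : ℝ) :
    HasDerivAt (fun t => F0 u t θ) (F1 u r θ) r := by
  have := (hfd_u hu (γ_mem' hr θ)).comp_hasDerivAt r (hasDerivAt_γ_r r θ)
  exact this

lemma hF1r (hu : ContDiffOn ℝ 2 u (ball 0 1)) {r : ℝ} (hr : |r| < 1) (θ : ℝ) :
    HasDerivAt (fun t => F1 u t θ) (F2 u r θ) r := by
  have h1 : HasDerivAt (fun t => fderiv ℝ u (γ t θ))
      (fderiv ℝ (fderiv ℝ u) (γ r θ) (vv θ)) r :=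
    (hfd_Du hu (γ_mem' hr θ)).comp_hasDerivAt r (hasDerivAt_γ_r r θ)
  have := h1.clm_apply (hasDerivAt_const r (vv θ))
  simpa [F1, F2] using this

lemma hF0θ (hu : ContDiffOn ℝ 2 u (ball 0 1)) {r : ℝ} (hr : |r| < 1) (θ : ℝ) :
    HasDerivAt (fun t => F0 u r t) (GG u r θ) θ := by
  have := (hfd_u hu (γ_mem' hr θ)).comp_hasDerivAt θ (hasDerivAt_γ_θ r θ)
  simp only [_root_.map_smul, smul_eq_mul] at this
  exact this

lemma hGGθ (hu : ContDiffOn ℝ 2 u (ball 0 1)) {r : ℝ} (hr : |r| < 1) (θ : ℝ) :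
    HasDerivAt (fun t => GG u r t) (r ^ 2 * W2 u r θ - r * F1 u r θ) θ := by
  have h1 : HasDerivAt (fun t => fderiv ℝ u (γ r t))
      (fderiv ℝ (fderiv ℝ u) (γ r θ) (r • ww θ)) θ :=
    (hfd_Du hu (γ_mem' hr θ)).comp_hasDerivAt θ (hasDerivAt_γ_θ r θ)
  have h2 := (h1.clm_apply (hasDerivAt_ww θ)).const_mul r
  refine h2.congr_deriv ?_
  simp only [W2, F1, GG, _root_.map_smul, ContinuousLinearMap.smul_apply,
    ContinuousLinearMap.coe_smul', Pi.smul_apply, smul_eq_mul, map_neg]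
  ring

/-- generic joint-continuity helper -/
lemma contOn_apply {F : Type*} [NormedAddCommGroup F] [NormedSpace ℝ F] {s : Set (ℝ × ℝ)}
    {g : ℝ × ℝ → E2 →L[ℝ] F} {h : ℝ × ℝ → E2} (hg : ContinuousOn g s) (hh : Continuous h) :
    ContinuousOn (fun p => g p (h p)) s :=
  by have := isBoundedBilinearMap_apply.continuous.comp_continuousOn (hg.prodMk hh.continuousOn); exact this

lemma mapsTo_γ : Set.MapsTo (fun p : ℝ × ℝ => γ p.1 p.2)
    (Set.Ioo (-1:ℝ) 1 ×ˢ (Set.univ : Set ℝ)) (ball (0:E2) 1) := by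
  rintro ⟨r, θ⟩ ⟨hr, -⟩
  exact γ_mem' (abs_lt.mpr ⟨hr.1, hr.2⟩) θ

lemma contOn_F0 (hu : ContDiffOn ℝ 2 u (ball 0 1)) :
    ContinuousOn (fun p : ℝ × ℝ => F0 u p.1 p.2) (Set.Ioo (-1:ℝ) 1 ×ˢ Set.univ) :=
  hu.continuousOn.comp cont_γ.continuousOn mapsTo_γ

lemma contOn_Duγ (hu : ContDiffOn ℝ 2 u (ball 0 1)) :
    ContinuousOn (fun p : ℝ × ℝ => fderiv ℝ u (γ p.1 p.2)) (Set.Ioo (-1:ℝ) 1 ×ˢ Set.univ) :=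
  (contOn_Du hu).comp cont_γ.continuousOn mapsTo_γ

lemma contOn_Huγ (hu : ContDiffOn ℝ 2 u (ball 0 1)) :
    ContinuousOn (fun p : ℝ × ℝ => fderiv ℝ (fderiv ℝ u) (γ p.1 p.2))
      (Set.Ioo (-1:ℝ) 1 ×ˢ Set.univ) :=
  (contOn_Hu hu).comp cont_γ.continuousOn mapsTo_γ

lemma contOn_F1 (hu : ContDiffOn ℝ 2 u (ball 0 1)) :
    ContinuousOn (fun p : ℝ × ℝ => F1 u p.1 p.2) (Set.Ioo (-1:ℝ) 1 ×ˢ Set.univ) :=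
  contOn_apply (contOn_Duγ hu) (cont_vv.comp continuous_snd)

lemma contOn_F2 (hu : ContDiffOn ℝ 2 u (ball 0 1)) :
    ContinuousOn (fun p : ℝ × ℝ => F2 u p.1 p.2) (Set.Ioo (-1:ℝ) 1 ×ˢ Set.univ) :=
  contOn_apply (contOn_apply (contOn_Huγ hu) (cont_vv.comp continuous_snd))
    (cont_vv.comp continuous_snd)

lemma contOn_W2 (hu : ContDiffOn ℝ 2 u (ball 0 1)) :
    ContinuousOn (fun p : ℝ × ℝ => W2 u p.1 p.2) (Set.Ioo (-1:ℝ) 1 ×ˢ Set.univ) :=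
  contOn_apply (contOn_apply (contOn_Huγ hu) (cont_ww.comp continuous_snd))
    (cont_ww.comp continuous_snd)

lemma contOn_GG (hu : ContDiffOn ℝ 2 u (ball 0 1)) :
    ContinuousOn (fun p : ℝ × ℝ => GG u p.1 p.2) (Set.Ioo (-1:ℝ) 1 ×ˢ Set.univ) :=
  (continuousOn_fst).mul (contOn_apply (contOn_Duγ hu) (cont_ww.comp continuous_snd))

end SLaux

namespace SLaux

open Real Set MeasureTheory intervalIntegral

variable {u : E2 → ℝ}

lemma cont_slice {G : ℝ → ℝ → ℝ}
    (hG : ContinuousOn (fun p : ℝ × ℝ => G p.1 p.2) (Set.Ioo (-1:ℝ) 1 ×ˢ Set.univ))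
    {r : ℝ} (hr : r ∈ Set.Ioo (-1:ℝ) 1) : Continuous (G r) := by
  rw [continuous_iff_continuousAt]
  intro θ
  have hopen : IsOpen (Set.Ioo (-1:ℝ) 1 ×ˢ (Set.univ : Set ℝ)) := isOpen_Ioo.prod isOpen_univ
  have h1 : ContinuousAt (fun p : ℝ × ℝ => G p.1 p.2) (r, θ) :=
    hG.continuousAt (hopen.mem_nhds ⟨hr, Set.mem_univ θ⟩)
  exact h1.comp (Continuous.prodMk_right r).continuousAt

/-- differentiation under the integral sign -/
lemma hasDerivAt_param {G G' : ℝ → ℝ → ℝ}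
    (hGc : ContinuousOn (fun p : ℝ × ℝ => G p.1 p.2) (Set.Ioo (-1:ℝ) 1 ×ˢ Set.univ))
    (hG'c : ContinuousOn (fun p : ℝ × ℝ => G' p.1 p.2) (Set.Ioo (-1:ℝ) 1 ×ˢ Set.univ))
    (hder : ∀ θ : ℝ, ∀ r ∈ Set.Ioo (-1:ℝ) 1, HasDerivAt (fun t => G t θ) (G' r θ) r)
    {r₀ : ℝ} (hr₀ : r₀ ∈ Set.Ioo (-1:ℝ) 1) :
    HasDerivAt (fun r => ∫ θ in (0:ℝ)..(2 * Real.pi), G r θ)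
      (∫ θ in (0:ℝ)..(2 * Real.pi), G' r₀ θ) r₀ := by
  obtain ⟨hr₁, hr₂⟩ := hr₀
  set ε : ℝ := (min (1 - r₀) (r₀ + 1)) / 2 with hε
  have hεpos : 0 < ε := by
    have h1 : 0 < 1 - r₀ := by linarith
    have h2 : 0 < r₀ + 1 := by linarith
    have := lt_min h1 h2
    positivity
  have hsub : Set.Icc (r₀ - ε) (r₀ + ε) ⊆ Set.Ioo (-1:ℝ) 1 := by
    intro x hx
    have h1 : ε < 1 - r₀ := by
      have := min_le_left (1 - r₀) (r₀ + 1); rw [hε]; linarith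
    have h2 : ε < r₀ + 1 := by
      have := min_le_right (1 - r₀) (r₀ + 1); rw [hε]; linarith
    exact ⟨by cases hx; linarith, by cases hx; linarith⟩
  have hK : IsCompact (Set.Icc (r₀ - ε) (r₀ + ε) ×ˢ Set.Icc (0:ℝ) (2 * Real.pi)) :=
    isCompact_Icc.prod isCompact_Icc
  have hKsub : (Set.Icc (r₀ - ε) (r₀ + ε) ×ˢ Set.Icc (0:ℝ) (2 * Real.pi))
      ⊆ Set.Ioo (-1:ℝ) 1 ×ˢ Set.univ := by
    rintro ⟨x, y⟩ ⟨hx, -⟩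
    exact ⟨hsub hx, Set.mem_univ _⟩
  obtain ⟨C, hC⟩ := hK.exists_bound_of_continuousOn (hG'c.mono hKsub)
  have hball : Metric.ball r₀ ε ⊆ Set.Icc (r₀ - ε) (r₀ + ε) := by
    intro x hx
    rw [Real.ball_eq_Ioo] at hx
    exact ⟨le_of_lt hx.1, le_of_lt hx.2⟩
  have huIoc : Set.uIoc (0:ℝ) (2 * Real.pi) ⊆ Set.Icc (0:ℝ) (2 * Real.pi) := by
    rw [Set.uIoc_of_le (by positivity : (0:ℝ) ≤ 2 * Real.pi)]
    exact Set.Ioc_subset_Icc_self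
  have key := intervalIntegral.hasDerivAt_integral_of_dominated_loc_of_deriv_le
    (F := G) (F' := G') (x₀ := r₀) (a := 0) (b := 2 * Real.pi) (μ := volume)
    (bound := fun _ => C) (ball_mem_nhds r₀ hεpos)
    (Filter.eventually_of_mem (isOpen_Ioo.mem_nhds ⟨hr₁, hr₂⟩)
      (fun x hx => (cont_slice hGc hx).aestronglyMeasurable))
    ((cont_slice hGc ⟨hr₁, hr₂⟩).intervalIntegrable 0 (2 * Real.pi))
    ((cont_slice hG'c ⟨hr₁, hr₂⟩).aestronglyMeasurable)
    (Filter.Eventually.of_forall fun θ hθ x hx => by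
      have := hC (x, θ) ⟨hball hx, huIoc hθ⟩
      simpa using this)
    intervalIntegrable_const
    (Filter.Eventually.of_forall fun θ hθ x hx => hder θ x (hsub (hball hx)))
  exact key.2

/-- the θ-direction FTC identity -/
lemma theta_identity (hu : ContDiffOn ℝ 2 u (ball 0 1)) {r : ℝ} (hr : r ∈ Set.Ioo (-1:ℝ) 1)
    {χ χ' : ℝ → ℝ} {k : ℝ}
    (hχ : ∀ θ, HasDerivAt χ (χ' θ) θ) (hχ' : ∀ θ, HasDerivAt χ' (k * χ θ) θ)
    (hper : χ 0 = χ (2 * Real.pi)) (hper' : χ' 0 = χ' (2 * Real.pi)) :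
    ∫ θ in (0:ℝ)..(2 * Real.pi), (r ^ 2 * W2 u r θ - r * F1 u r θ) * χ θ
      = k * ∫ θ in (0:ℝ)..(2 * Real.pi), F0 u r θ * χ θ := by
  have hrabs : |r| < 1 := abs_lt.mpr ⟨hr.1, hr.2⟩
  have hcχ : Continuous χ := continuous_iff_continuousAt.mpr fun x => (hχ x).continuousAt
  have hcχ' : Continuous χ' := continuous_iff_continuousAt.mpr fun x => (hχ' x).continuousAt
  have hW2c : Continuous (fun θ => W2 u r θ) := cont_slice (contOn_W2 hu) hr
  have hF1c : Continuous (fun θ => F1 u r θ) := cont_slice (contOn_F1 hu) hr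
  have hF0c : Continuous (fun θ => F0 u r θ) := cont_slice (contOn_F0 hu) hr
  have hh : ∀ θ : ℝ, HasDerivAt (fun t => GG u r t * χ t - F0 u r t * χ' t)
      ((r ^ 2 * W2 u r θ - r * F1 u r θ) * χ θ - k * (F0 u r θ * χ θ)) θ := by
    intro θ
    have h1 := ((hGGθ hu hrabs θ).mul (hχ θ)).sub ((hF0θ hu hrabs θ).mul (hχ' θ))
    refine h1.congr_deriv ?_
    ring
  have hint : IntervalIntegrable
      (fun θ => (r ^ 2 * W2 u r θ - r * F1 u r θ) * χ θ - k * (F0 u r θ * χ θ))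
      volume 0 (2 * Real.pi) :=
    ((((continuous_const.mul hW2c).sub (continuous_const.mul hF1c)).mul hcχ).sub
      (continuous_const.mul (hF0c.mul hcχ))).intervalIntegrable _ _
  have key := intervalIntegral.integral_eq_sub_of_hasDerivAt (fun θ _ => hh θ) hint
  have hzero : (GG u r (2 * Real.pi) * χ (2 * Real.pi) - F0 u r (2 * Real.pi) * χ' (2 * Real.pi))
      - (GG u r 0 * χ 0 - F0 u r 0 * χ' 0) = 0 := by
    have hGGper : GG u r (2 * Real.pi) = GG u r 0 := by rw [GG, GG, γ_per, ww_per]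
    have hF0per : F0 u r (2 * Real.pi) = F0 u r 0 := by rw [F0, F0, γ_per]
    rw [hGGper, hF0per, ← hper, ← hper']; ring
  rw [hzero] at key
  have hi1 : IntervalIntegrable (fun θ => (r ^ 2 * W2 u r θ - r * F1 u r θ) * χ θ)
      volume 0 (2 * Real.pi) :=
    (((continuous_const.mul hW2c).sub (continuous_const.mul hF1c)).mul hcχ).intervalIntegrable _ _
  have hi2 : IntervalIntegrable (fun θ => k * (F0 u r θ * χ θ)) volume 0 (2 * Real.pi) :=
    (continuous_const.mul (hF0c.mul hcχ)).intervalIntegrable _ _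
  rw [intervalIntegral.integral_sub hi1 hi2, sub_eq_zero] at key
  rw [key, intervalIntegral.integral_const_mul]

end SLaux

namespace SLaux

open Real Set MeasureTheory intervalIntegral

variable {u : E2 → ℝ}

/-- weighted circle integral of `u` -/
def cI (u : E2 → ℝ) (χ : ℝ → ℝ) (r : ℝ) : ℝ := ∫ θ in (0:ℝ)..(2 * Real.pi), F0 u r θ * χ θ
/-- weighted circle integral of the radial derivative -/
def dI (u : E2 → ℝ) (χ : ℝ → ℝ) (r : ℝ) : ℝ := ∫ θ in (0:ℝ)..(2 * Real.pi), F1 u r θ * χ θ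
/-- weighted circle integral of the Laplacian -/
def lI (u : E2 → ℝ) (χ : ℝ → ℝ) (r : ℝ) : ℝ :=
  ∫ θ in (0:ℝ)..(2 * Real.pi), (F2 u r θ + W2 u r θ) * χ θ

lemma lap_point (hu : ContDiffOn ℝ 2 u (ball 0 1)) {r : ℝ} (hr : r ∈ Set.Ioo (-1:ℝ) 1)
    (θ : ℝ) : F2 u r θ + W2 u r θ = lapW (ball 0 1) u (γ r θ) := by
  rw [lap_eq hu (γ_mem' (abs_lt.mpr ⟨hr.1, hr.2⟩) θ)]
  exact rot _ θ

lemma cI_hasDeriv (hu : ContDiffOn ℝ 2 u (ball 0 1)) {χ : ℝ → ℝ} (hcχ : Continuous χ)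
    {r : ℝ} (hr : r ∈ Set.Ioo (-1:ℝ) 1) : HasDerivAt (cI u χ) (dI u χ r) r := by
  refine hasDerivAt_param ?_ ?_ (fun θ t ht => (hF0r hu (abs_lt.mpr ⟨ht.1, ht.2⟩) θ).mul_const _) hr
  · exact (contOn_F0 hu).mul (hcχ.comp continuous_snd).continuousOn
  · exact (contOn_F1 hu).mul (hcχ.comp continuous_snd).continuousOn

lemma dI_hasDeriv (hu : ContDiffOn ℝ 2 u (ball 0 1)) {χ : ℝ → ℝ} (hcχ : Continuous χ)
    {r : ℝ} (hr : r ∈ Set.Ioo (-1:ℝ) 1) :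
    HasDerivAt (dI u χ) (∫ θ in (0:ℝ)..(2 * Real.pi), F2 u r θ * χ θ) r := by
  refine hasDerivAt_param ?_ ?_ (fun θ t ht => (hF1r hu (abs_lt.mpr ⟨ht.1, ht.2⟩) θ).mul_const _) hr
  · exact (contOn_F1 hu).mul (hcχ.comp continuous_snd).continuousOn
  · exact (contOn_F2 hu).mul (hcχ.comp continuous_snd).continuousOn

lemma ell_bound (hu : ContDiffOn ℝ 2 u (ball 0 1)) {M : ℝ}
    (hM : ∀ ζ ∈ ball (0:E2) 1, |lapW (ball 0 1) u ζ| ≤ M)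
    {χ : ℝ → ℝ} (hbd : ∀ θ, |χ θ| ≤ 1) {r : ℝ} (hr : r ∈ Set.Ioo (-1:ℝ) 1) :
    |lI u χ r| ≤ 2 * Real.pi * M := by
  have hM0 : 0 ≤ M := le_trans (abs_nonneg _) (hM 0 (by simp))
  have h := intervalIntegral.norm_integral_le_of_norm_le_const
    (C := M) (f := fun θ => (F2 u r θ + W2 u r θ) * χ θ) (a := 0) (b := 2 * Real.pi) ?_
  · rw [Real.norm_eq_abs] at h
    calc |lI u χ r| ≤ M * |2 * Real.pi - 0| := h
      _ = 2 * Real.pi * M := by rw [sub_zero, abs_of_nonneg (by positivity)]; ring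
  · intro θ _
    rw [Real.norm_eq_abs, abs_mul]
    calc |F2 u r θ + W2 u r θ| * |χ θ| ≤ M * 1 := by
          refine mul_le_mul ?_ (hbd θ) (abs_nonneg _) hM0
          rw [lap_point hu hr θ]
          exact hM _ (γ_mem' (abs_lt.mpr ⟨hr.1, hr.2⟩) θ)
      _ = M := mul_one M

/-- the integrated ODE -/
lemma F2_integral_eq (hu : ContDiffOn ℝ 2 u (ball 0 1))
    {χ χ' : ℝ → ℝ} {k : ℝ}
    (hχ : ∀ θ, HasDerivAt χ (χ' θ) θ) (hχ' : ∀ θ, HasDerivAt χ' (k * χ θ) θ)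
    (hper : χ 0 = χ (2 * Real.pi)) (hper' : χ' 0 = χ' (2 * Real.pi))
    {r : ℝ} (hr : r ∈ Set.Ioo (-1:ℝ) 1) (hrne : r ≠ 0) :
    ∫ θ in (0:ℝ)..(2 * Real.pi), F2 u r θ * χ θ
      = lI u χ r - (k * cI u χ r + r * dI u χ r) / r ^ 2 := by
  have hcχ : Continuous χ := continuous_iff_continuousAt.mpr fun x => (hχ x).continuousAt
  have hW2c : Continuous (fun θ => W2 u r θ) := cont_slice (contOn_W2 hu) hr
  have hF1c : Continuous (fun θ => F1 u r θ) := cont_slice (contOn_F1 hu) hr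
  have hF2c : Continuous (fun θ => F2 u r θ) := cont_slice (contOn_F2 hu) hr
  have hti := theta_identity hu hr hχ hχ' hper hper'
  have hsplit : ∫ θ in (0:ℝ)..(2 * Real.pi), (r ^ 2 * W2 u r θ - r * F1 u r θ) * χ θ
      = r ^ 2 * (∫ θ in (0:ℝ)..(2 * Real.pi), W2 u r θ * χ θ) - r * dI u χ r := by
    rw [dI, ← intervalIntegral.integral_const_mul, ← intervalIntegral.integral_const_mul,
      ← intervalIntegral.integral_sub]
    · congr 1; funext θ; ring
    · exact (continuous_const.mul (hW2c.mul hcχ)).intervalIntegrable _ _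
    · exact (continuous_const.mul (hF1c.mul hcχ)).intervalIntegrable _ _
  have hW2int : ∫ θ in (0:ℝ)..(2 * Real.pi), W2 u r θ * χ θ
      = (k * cI u χ r + r * dI u χ r) / r ^ 2 := by
    rw [hsplit] at hti
    rw [eq_div_iff (by positivity : (r:ℝ) ^ 2 ≠ 0)]
    rw [cI]
    linarith [hti]
  have hF2split : ∫ θ in (0:ℝ)..(2 * Real.pi), F2 u r θ * χ θ
      = lI u χ r - ∫ θ in (0:ℝ)..(2 * Real.pi), W2 u r θ * χ θ := by
    rw [lI, ← intervalIntegral.integral_sub]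
    · congr 1; funext θ; ring
    · exact ((hF2c.add hW2c).mul hcχ).intervalIntegrable _ _
    · exact (hW2c.mul hcχ).intervalIntegrable _ _
  rw [hF2split, hW2int]

lemma F0_zero (θ : ℝ) : F0 u 0 θ = u 0 := by
  simp [F0, γ]

lemma F1_zero (θ : ℝ) : F1 u 0 θ = fderiv ℝ u 0 (vv θ) := by
  simp [F1, γ]

lemma F1_zero' (θ : ℝ) :
    F1 u 0 θ = Real.cos θ * fderiv ℝ u 0 e₁ + Real.sin θ * fderiv ℝ u 0 e₂ := by
  rw [F1_zero, vv, map_add, _root_.map_smul, _root_.map_smul]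
  simp [smul_eq_mul]

lemma dI_one_zero : dI u (fun _ => 1) 0 = 0 := by
  rw [dI]
  rw [intervalIntegral.integral_congr
    (g := fun θ => Real.cos θ * fderiv ℝ u 0 e₁ + Real.sin θ * fderiv ℝ u 0 e₂)
    (fun θ _ => by rw [F1_zero' θ]; ring)]
  rw [intervalIntegral.integral_add, intervalIntegral.integral_mul_const,
    intervalIntegral.integral_mul_const, integral_cos, integral_sin]
  · simp
  · exact (Real.continuous_cos.mul continuous_const).intervalIntegrable _ _
  · exact (Real.continuous_sin.mul continuous_const).intervalIntegrable _ _

lemma cI_one_zero : cI u (fun _ => 1) 0 = 2 * Real.pi * u 0 := by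
  rw [cI]
  rw [intervalIntegral.integral_congr (g := fun _ => u 0) (fun θ _ => by rw [F0_zero θ]; ring)]
  simp [mul_comm]

/-- the mode-zero bound -/
lemma mode0 (hu : ContDiffOn ℝ 2 u (ball 0 1)) (hneg : ∀ z ∈ ball (0:E2) 1, u z < 0)
    {M : ℝ} (hM : ∀ ζ ∈ ball (0:E2) 1, |lapW (ball 0 1) u ζ| ≤ M) :
    -(cI u (fun _ => 1) (1/2)) ≤ 2 * Real.pi * |u 0| + Real.pi * M := by
  have hM0 : 0 ≤ M := le_trans (abs_nonneg _) (hM 0 (by simp))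
  have hIoo : ∀ r : ℝ, r ∈ Set.Icc (0:ℝ) (1/2) → r ∈ Set.Ioo (-1:ℝ) 1 := by
    intro r hr
    exact ⟨by linarith [hr.1], by linarith [hr.2]⟩
  have hχ : ∀ θ : ℝ, HasDerivAt (fun _ : ℝ => (1:ℝ)) ((fun _ : ℝ => (0:ℝ)) θ) θ :=
    fun θ => hasDerivAt_const θ 1
  have hχ' : ∀ θ : ℝ, HasDerivAt (fun _ : ℝ => (0:ℝ)) ((0:ℝ) * (fun _ : ℝ => (1:ℝ)) θ) θ := by
    intro θ; simpa using hasDerivAt_const θ (0:ℝ)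
  -- derivative of e r = r * dI r
  have he : ∀ r ∈ Set.Icc (0:ℝ) (1/2),
      HasDerivAt (fun t => t * dI u (fun _ => 1) t) (r * lI u (fun _ => 1) r) r := by
    intro r hr
    have h1 := (hasDerivAt_id r).mul (dI_hasDeriv hu (χ := fun _ => (1:ℝ)) continuous_const (hIoo r hr))
    rcases eq_or_lt_of_le hr.1 with h0 | h0
    · subst h0
      refine h1.congr_deriv ?_
      simp [dI_one_zero]
    · rw [F2_integral_eq hu hχ hχ' rfl rfl (hIoo r hr) (ne_of_gt h0)] at h1
      refine h1.congr_deriv ?_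
      simp only [id_eq]
      field_simp
      ring
  -- bound |dI t| ≤ π M on [0, 1/2]
  have hdbound : ∀ t ∈ Set.Icc (0:ℝ) (1/2), |dI u (fun _ => 1) t| ≤ Real.pi * M := by
    intro t ht
    rcases eq_or_lt_of_le ht.1 with h0 | h0
    · rw [← h0, dI_one_zero]
      simp
      positivity
    · have hmvt := Convex.norm_image_sub_le_of_norm_hasDerivWithin_le
        (f := fun t => t * dI u (fun _ => 1) t) (f' := fun r => r * lI u (fun _ => 1) r)
        (C := t * (2 * Real.pi * M)) (s := Set.Icc (0:ℝ) t)
        (fun x hx => (he x ⟨hx.1, le_trans hx.2 ht.2⟩).hasDerivWithinAt)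
        (fun x hx => by
          rw [Real.norm_eq_abs, abs_mul]
          have h1 := ell_bound hu hM (fun θ => by norm_num : ∀ θ:ℝ, |(1:ℝ)| ≤ 1)
            (hIoo x ⟨hx.1, le_trans hx.2 ht.2⟩)
          have h2 : |x| ≤ t := by
            rw [abs_of_nonneg hx.1]; exact hx.2
          exact mul_le_mul h2 h1 (abs_nonneg _) (le_trans hx.1 hx.2))
        (convex_Icc _ _) (Set.left_mem_Icc.mpr (le_of_lt h0)) (Set.right_mem_Icc.mpr (le_of_lt h0))
      simp only [Real.norm_eq_abs, zero_mul, sub_zero] at hmvt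
      rw [abs_mul] at hmvt
      simp only [abs_of_pos h0] at hmvt
      have h3 : |dI u (fun _ => 1) t| ≤ 2 * Real.pi * M * t := by
        have := hmvt
        nlinarith [abs_nonneg (dI u (fun _ => 1) t)]
      calc |dI u (fun _ => 1) t| ≤ 2 * Real.pi * M * t := h3
        _ ≤ 2 * Real.pi * M * (1/2) := by
            have h5 : (0:ℝ) ≤ 2 * Real.pi * M := by positivity
            nlinarith [ht.2]
        _ = Real.pi * M := by ring
  -- bound on cI
  have hcmvt := Convex.norm_image_sub_le_of_norm_hasDerivWithin_le
    (f := cI u (fun _ => 1)) (f' := dI u (fun _ => 1)) (C := Real.pi * M)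
    (s := Set.Icc (0:ℝ) (1/2))
    (fun x hx => (cI_hasDeriv hu (χ := fun _ => (1:ℝ)) continuous_const (hIoo x hx)).hasDerivWithinAt)
    (fun x hx => hdbound x hx)
    (convex_Icc _ _) (Set.left_mem_Icc.mpr (by norm_num)) (Set.right_mem_Icc.mpr (by norm_num))
  rw [Real.norm_eq_abs, Real.norm_eq_abs, sub_zero, cI_one_zero] at hcmvt
  have hu0 : u 0 < 0 := hneg 0 (mem_ball_self one_pos)
  have habs : |u 0| = -u 0 := abs_of_neg hu0
  have h4 : |cI u (fun _ => 1) (1/2) - 2 * Real.pi * u 0| ≤ Real.pi * M * (1/2) := by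
    calc |cI u (fun _ => 1) (1/2) - 2 * Real.pi * u 0| ≤ Real.pi * M * |1/2| := hcmvt
      _ = Real.pi * M * (1/2) := by norm_num
  have := abs_le.mp h4
  rw [habs]
  nlinarith [Real.pi_pos, this.1, this.2]

end SLaux

namespace SLaux

open Real Set MeasureTheory intervalIntegral

variable {u : E2 → ℝ}

lemma modeX (hu : ContDiffOn ℝ 2 u (ball 0 1)) (hneg : ∀ z ∈ ball (0:E2) 1, u z < 0)
    {M : ℝ} (hM : ∀ ζ ∈ ball (0:E2) 1, |lapW (ball 0 1) u ζ| ≤ M)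
    {χ χ' : ℝ → ℝ} (hχ : ∀ θ, HasDerivAt χ (χ' θ) θ)
    (hχ' : ∀ θ, HasDerivAt χ' ((-1) * χ θ) θ)
    (hper : χ 0 = χ (2 * Real.pi)) (hper' : χ' 0 = χ' (2 * Real.pi))
    (hbd : ∀ θ, |χ θ| ≤ 1) :
    |dI u χ 0| ≤ 4 * Real.pi * |u 0| + 3 * Real.pi * M := by
  have hM0 : 0 ≤ M := le_trans (abs_nonneg _) (hM 0 (by simp))
  have hcχ : Continuous χ := continuous_iff_continuousAt.mpr fun x => (hχ x).continuousAt
  have hIoo : ∀ r : ℝ, r ∈ Set.Icc (0:ℝ) (1/2) → r ∈ Set.Ioo (-1:ℝ) 1 := by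
    intro r hr
    exact ⟨by linarith [hr.1], by linarith [hr.2]⟩
  -- ∫ χ = 0
  have hftc := intervalIntegral.integral_eq_sub_of_hasDerivAt (f := χ')
    (f' := fun θ => (-1) * χ θ) (a := 0) (b := 2 * Real.pi)
    (fun θ _ => hχ' θ) ((continuous_const.mul hcχ).intervalIntegrable _ _)
  rw [intervalIntegral.integral_const_mul, ← hper'] at hftc
  have hintχ : (∫ θ in (0:ℝ)..(2 * Real.pi), χ θ) = 0 := by linarith [hftc]
  have hcI0 : cI u χ 0 = 0 := by
    rw [cI, intervalIntegral.integral_congr (g := fun θ => u 0 * χ θ)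
      (fun θ _ => by rw [F0_zero θ]), intervalIntegral.integral_const_mul, hintχ, mul_zero]
  -- derivative of p r = r^2 * dI r - r * cI r
  have hp : ∀ r ∈ Set.Icc (0:ℝ) (1/2),
      HasDerivAt (fun t => t ^ 2 * dI u χ t - t * cI u χ t) (r ^ 2 * lI u χ r) r := by
    intro r hr
    have h1 := ((hasDerivAt_pow 2 r).mul (dI_hasDeriv hu hcχ (hIoo r hr))).sub
      ((hasDerivAt_id r).mul (cI_hasDeriv hu hcχ (hIoo r hr)))
    rcases eq_or_lt_of_le hr.1 with h0 | h0
    · subst h0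
      refine h1.congr_deriv ?_
      simp [hcI0]
    · rw [F2_integral_eq hu hχ hχ' hper hper' (hIoo r hr) (ne_of_gt h0)] at h1
      refine h1.congr_deriv ?_
      simp only [id_eq]
      field_simp
      ring
  -- bound |p t| ≤ 2πM t³
  have hpbound : ∀ t ∈ Set.Icc (0:ℝ) (1/2),
      |t ^ 2 * dI u χ t - t * cI u χ t| ≤ 2 * Real.pi * M * t ^ 3 := by
    intro t ht
    rcases eq_or_lt_of_le ht.1 with h0 | h0
    · rw [← h0]
      simp
    · have hmvt := Convex.norm_image_sub_le_of_norm_hasDerivWithin_le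
        (f := fun t => t ^ 2 * dI u χ t - t * cI u χ t) (f' := fun r => r ^ 2 * lI u χ r)
        (C := t ^ 2 * (2 * Real.pi * M)) (s := Set.Icc (0:ℝ) t)
        (fun x hx => (hp x ⟨hx.1, le_trans hx.2 ht.2⟩).hasDerivWithinAt)
        (fun x hx => by
          rw [Real.norm_eq_abs, abs_mul]
          have h1 := ell_bound hu hM hbd (hIoo x ⟨hx.1, le_trans hx.2 ht.2⟩)
          have h2 : |x ^ 2| ≤ t ^ 2 := by
            rw [abs_of_nonneg (sq_nonneg x)]
            exact pow_le_pow_left₀ hx.1 hx.2 2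
          exact mul_le_mul h2 h1 (abs_nonneg _) (sq_nonneg t))
        (convex_Icc _ _) (Set.left_mem_Icc.mpr (le_of_lt h0)) (Set.right_mem_Icc.mpr (le_of_lt h0))
      simp only [Real.norm_eq_abs, sub_zero] at hmvt
      have h3 : (0:ℝ) ^ 2 * dI u χ 0 - 0 * cI u χ 0 = 0 := by ring
      rw [h3, sub_zero, abs_of_pos h0] at hmvt
      calc |t ^ 2 * dI u χ t - t * cI u χ t| ≤ t ^ 2 * (2 * Real.pi * M) * t := hmvt
        _ = 2 * Real.pi * M * t ^ 3 := by ring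
  -- derivative of w = cI / r on (0, 1/2]
  have hw : ∀ x ∈ Set.Icc (0:ℝ) (1/2), 0 < x →
      HasDerivAt (fun r => cI u χ r / r)
        ((x ^ 2 * dI u χ x - x * cI u χ x) / x ^ 3) x := by
    intro x hx hx0
    have h1 := (cI_hasDeriv hu hcχ (hIoo x hx)).div (hasDerivAt_id x) (ne_of_gt hx0)
    refine h1.congr_deriv ?_
    simp only [id_eq]
    field_simp
  -- MVT on [ε, 1/2]
  have hwR : ∀ ε : ℝ, ε ∈ Set.Ioc (0:ℝ) (1/2) →
      |cI u χ (1/2) / (1/2) - cI u χ ε / ε| ≤ 2 * Real.pi * M * (1/2) := by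
    intro ε hε
    have hmvt := Convex.norm_image_sub_le_of_norm_hasDerivWithin_le
      (f := fun r => cI u χ r / r)
      (f' := fun x => (x ^ 2 * dI u χ x - x * cI u χ x) / x ^ 3)
      (C := 2 * Real.pi * M) (s := Set.Icc ε (1/2))
      (fun x hx => (hw x ⟨le_trans (le_of_lt hε.1) hx.1, hx.2⟩
        (lt_of_lt_of_le hε.1 hx.1)).hasDerivWithinAt)
      (fun x hx => by
        have hx0 : 0 < x := lt_of_lt_of_le hε.1 hx.1
        rw [Real.norm_eq_abs, abs_div]
        rw [abs_of_pos (by positivity : (0:ℝ) < x ^ 3)]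
        rw [div_le_iff₀ (by positivity)]
        calc |x ^ 2 * dI u χ x - x * cI u χ x| ≤ 2 * Real.pi * M * x ^ 3 :=
              hpbound x ⟨le_of_lt hx0, hx.2⟩
          _ = 2 * Real.pi * M * x ^ 3 := rfl)
      (convex_Icc _ _) (Set.right_mem_Icc.mpr hε.2) (Set.left_mem_Icc.mpr hε.2)
    simp only [Real.norm_eq_abs] at hmvt
    rw [abs_sub_comm] at hmvt
    rw [abs_sub_comm (ε) (1/2)] at hmvt
    calc |cI u χ (1/2) / (1/2) - cI u χ ε / ε| ≤ 2 * Real.pi * M * |1/2 - ε| := hmvt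
      _ ≤ 2 * Real.pi * M * (1/2) := by
          have h5 : (0:ℝ) ≤ 2 * Real.pi * M := by positivity
          have h6 : |1/2 - ε| ≤ 1/2 := by
            rw [abs_of_nonneg (by linarith [hε.2])]
            linarith [hε.1]
          nlinarith
  -- limit of cI ε / ε as ε → 0⁺
  have hT : Filter.Tendsto (fun ε => cI u χ ε / ε) (nhdsWithin 0 (Set.Ioi 0))
      (nhds (dI u χ 0)) := by
    have hd := cI_hasDeriv hu hcχ (show (0:ℝ) ∈ Set.Ioo (-1:ℝ) 1 by norm_num)
    have h1 := hasDerivAt_iff_tendsto_slope.mp hd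
    have h2 := h1.mono_left (nhdsWithin_mono 0 (fun x (hx : x ∈ Set.Ioi 0) =>
      (ne_of_gt hx : x ≠ 0)))
    refine h2.congr fun x => ?_
    rw [slope_def_field, hcI0, sub_zero, sub_zero]
  -- conclude
  have hlim : Filter.Tendsto (fun ε => |cI u χ (1/2) / (1/2) - cI u χ ε / ε|)
      (nhdsWithin 0 (Set.Ioi 0)) (nhds (|cI u χ (1/2) / (1/2) - dI u χ 0|)) :=
    (Filter.Tendsto.sub tendsto_const_nhds hT).abs
  have hev : ∀ᶠ ε in nhdsWithin 0 (Set.Ioi 0),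
      |cI u χ (1/2) / (1/2) - cI u χ ε / ε| ≤ 2 * Real.pi * M * (1/2) :=
    Filter.eventually_of_mem (Ioc_mem_nhdsGT (by norm_num : (0:ℝ) < 1/2))
      (fun ε hε => hwR ε hε)
  have hfinal : |cI u χ (1/2) / (1/2) - dI u χ 0| ≤ 2 * Real.pi * M * (1/2) :=
    le_of_tendsto hlim hev
  -- |cI χ (1/2)| ≤ -(cI 1 (1/2))
  have hcomp : |cI u χ (1/2)| ≤ -(cI u (fun _ => 1) (1/2)) := by
    have hF0c : Continuous (fun θ => F0 u (1/2) θ) :=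
      cont_slice (contOn_F0 hu) (by norm_num)
    have h1 : |cI u χ (1/2)| ≤ ∫ θ in (0:ℝ)..(2 * Real.pi), |F0 u (1/2) θ * χ θ| := by
      exact intervalIntegral.abs_integral_le_integral_abs (by positivity)
    have h2 : (∫ θ in (0:ℝ)..(2 * Real.pi), |F0 u (1/2) θ * χ θ|)
        ≤ ∫ θ in (0:ℝ)..(2 * Real.pi), -(F0 u (1/2) θ) := by
      refine intervalIntegral.integral_mono_on (by positivity)
        ((hF0c.mul hcχ).abs.intervalIntegrable _ _) (hF0c.neg.intervalIntegrable _ _) ?_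
      intro θ _
      have hFneg : F0 u (1/2) θ < 0 := hneg _ (γ_mem' (by rw [abs_of_nonneg]; norm_num; norm_num) θ)
      rw [abs_mul]
      calc |F0 u (1/2) θ| * |χ θ| ≤ |F0 u (1/2) θ| * 1 :=
            mul_le_mul_of_nonneg_left (hbd θ) (abs_nonneg _)
        _ = |F0 u (1/2) θ| := mul_one _
        _ = -(F0 u (1/2) θ) := abs_of_neg hFneg
    have h3 : (∫ θ in (0:ℝ)..(2 * Real.pi), -(F0 u (1/2) θ)) = -(cI u (fun _ => 1) (1/2)) := by
      rw [intervalIntegral.integral_neg, cI]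
      congr 1
      refine intervalIntegral.integral_congr fun θ _ => ?_
      rw [mul_one]
    linarith [h1, h2, h3.le, h3.ge]
  have hm0 := mode0 hu hneg hM
  -- assemble
  rw [show 2 * Real.pi * M * (1/2) = Real.pi * M by ring] at hfinal
  have h7 : |dI u χ 0| ≤ |cI u χ (1/2) / (1/2)| + Real.pi * M := by
    have h8 := abs_sub_abs_le_abs_sub (dI u χ 0) (cI u χ (1/2) / (1/2))
    rw [abs_sub_comm] at h8
    linarith [hfinal]
  have h10 : |cI u χ (1/2) / (1/2)| = 2 * |cI u χ (1/2)| := by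
    rw [abs_div]
    rw [abs_of_pos (by norm_num : (0:ℝ) < 1/2)]
    field_simp
  rw [h10] at h7
  calc |dI u χ 0| ≤ 2 * |cI u χ (1/2)| + Real.pi * M := h7
    _ ≤ 2 * (-(cI u (fun _ => 1) (1/2))) + Real.pi * M := by linarith [hcomp]
    _ ≤ 2 * (2 * Real.pi * |u 0| + Real.pi * M) + Real.pi * M := by linarith [hm0]
    _ = 4 * Real.pi * |u 0| + 3 * Real.pi * M := by ring

end SLaux

namespace SLaux

open Real Set MeasureTheory intervalIntegral

variable {u : E2 → ℝ}

lemma dI_cos_zero : dI u Real.cos 0 = Real.pi * fderiv ℝ u 0 e₁ := by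
  rw [dI, intervalIntegral.integral_congr
    (g := fun θ => fderiv ℝ u 0 e₁ * Real.cos θ ^ 2
      + fderiv ℝ u 0 e₂ * (Real.sin θ * Real.cos θ))
    (fun θ _ => by rw [F1_zero' θ]; ring)]
  rw [intervalIntegral.integral_add, intervalIntegral.integral_const_mul,
    intervalIntegral.integral_const_mul, integral_cos_sq, integral_sin_mul_cos₁]
  · simp [Real.cos_two_pi, Real.sin_two_pi]
    ring
  · exact (continuous_const.mul (Real.continuous_cos.pow 2)).intervalIntegrable _ _
  · exact (continuous_const.mul (Real.continuous_sin.mul Real.continuous_cos)).intervalIntegrable _ _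

lemma dI_sin_zero : dI u Real.sin 0 = Real.pi * fderiv ℝ u 0 e₂ := by
  rw [dI, intervalIntegral.integral_congr
    (g := fun θ => fderiv ℝ u 0 e₁ * (Real.sin θ * Real.cos θ)
      + fderiv ℝ u 0 e₂ * Real.sin θ ^ 2)
    (fun θ _ => by rw [F1_zero' θ]; ring)]
  rw [intervalIntegral.integral_add, intervalIntegral.integral_const_mul,
    intervalIntegral.integral_const_mul, integral_sin_sq, integral_sin_mul_cos₁]
  · simp [Real.cos_two_pi, Real.sin_two_pi]
    ring
  · exact (continuous_const.mul (Real.continuous_sin.mul Real.continuous_cos)).intervalIntegrable _ _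
  · exact (continuous_const.mul (Real.continuous_sin.pow 2)).intervalIntegrable _ _

end SLaux

open SLaux in
/-- If `u : D → ℝ` is `C²`, negative on `D`, and `|Δu| ≤ A·|u(0)|` on `D` for some `A > 0`,
then `|∇u(0)| ≤ C·|u(0)|` for a constant `C` depending only on `A`. -/
theorem stmt3 (A : ℝ) (hA : 0 < A) :
    ∃ C > 0, ∀ u : EuclideanSpace ℝ (Fin 2) → ℝ,
      ContDiffOn ℝ 2 u (ball 0 1) →
      (∀ z ∈ ball (0 : EuclideanSpace ℝ (Fin 2)) 1, u z < 0) →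
      (∀ ζ ∈ ball (0 : EuclideanSpace ℝ (Fin 2)) 1, |lapW (ball 0 1) u ζ| ≤ A * |u 0|) →
      ‖fderivWithin ℝ u (ball 0 1) 0‖ ≤ C * |u 0| := by
  refine ⟨8 + 6 * A, by positivity, fun u hu hneg hlap => ?_⟩
  have hπ := Real.pi_pos
  set M : ℝ := A * |u 0| with hMdef
  -- cosine mode
  have hcos := modeX hu hneg hlap (χ := Real.cos) (χ' := fun θ => -Real.sin θ)
    (fun θ => Real.hasDerivAt_cos θ)
    (fun θ => by
      have := (Real.hasDerivAt_sin θ).neg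
      rwa [show -Real.cos θ = (-1) * Real.cos θ by ring] at this)
    (by simp) (by simp) (fun θ => Real.abs_cos_le_one θ)
  have hsin := modeX hu hneg hlap (χ := Real.sin) (χ' := Real.cos)
    (fun θ => Real.hasDerivAt_sin θ)
    (fun θ => by
      have := Real.hasDerivAt_cos θ
      rwa [show -Real.sin θ = (-1) * Real.sin θ by ring] at this)
    (by simp) (by simp) (fun θ => Real.abs_sin_le_one θ)
  rw [dI_cos_zero, abs_mul, abs_of_pos hπ] at hcos
  rw [dI_sin_zero, abs_mul, abs_of_pos hπ] at hsin
  have h1 : |fderiv ℝ u 0 e₁| ≤ 4 * |u 0| + 3 * M := by nlinarith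
  have h2 : |fderiv ℝ u 0 e₂| ≤ 4 * |u 0| + 3 * M := by nlinarith
  rw [fderivWithin_of_isOpen isOpen_ball (mem_ball_self one_pos)]
  calc ‖fderiv ℝ u 0‖ ≤ |fderiv ℝ u 0 e₁| + |fderiv ℝ u 0 e₂| := opnorm_le _
    _ ≤ (4 * |u 0| + 3 * M) + (4 * |u 0| + 3 * M) := by linarith
    _ = (8 + 6 * A) * |u 0| := by rw [hMdef]; ring
end
end

section
/- Let u : D → ℝⁿ be C² with u(0) = 0 and du(0) injective, with u(ζ) = (ξ, η, 0, …, 0) + O(|ζ|²) near 0. Then Δ(log|u|)(ζ) = O(1/|ζ|) as ζ → 0: there exist C, r₀ > 0 such that |Δ(log|u(ζ)|)| ≤ C/|ζ| for 0 < |ζ| < r₀. Consequently, for A sufficiently large the function ζ ↦ log|u(ζ)| + A|u(ζ)| satisfies Δ(log|u| + A|u|) ≥ 0 on a punctured neighborhood of 0. -/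
noncomputable section

open Metric

/-! ### Auxiliary material -/

open scoped RealInnerProductSpace

namespace Stmt13Aux

abbrev E2 := EuclideanSpace ℝ (Fin 2)
abbrev En (n : ℕ) := EuclideanSpace ℝ (Fin n)

/-! #### Arithmetic bounds -/

set_option maxHeartbeats 1000000 in
lemma aux_bounds (E t m z0 z1 a1 a2 b1 b2 q1 q2 : ℝ)
    (hE : 1 ≤ E) (ht : 0 < t) (htE : E * t ≤ 1/100)
    (hm : |m^2 - t^2| ≤ E*t^3) (hsq : z0^2 + z1^2 = t^2)
    (ha1 : |a1 - z0| ≤ E*t^2) (ha2 : |a2 - z1| ≤ E*t^2)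
    (hb1 : |b1 - 1| ≤ E*t) (hb2 : |b2 - 1| ≤ E*t)
    (hq1 : |q1| ≤ E*t) (hq2 : |q2| ≤ E*t) :
    |(q1+q2+b1+b2)*m^2 - 2*(a1^2+a2^2)| ≤ 40*E*t^3 ∧
    t^2/2 ≤ (q1+q2+b1+b2)*m^2 - (a1^2+a2^2) := by
  obtain ⟨hm', hm''⟩ := abs_le.1 hm
  obtain ⟨ha1', ha1''⟩ := abs_le.1 ha1
  obtain ⟨ha2', ha2''⟩ := abs_le.1 ha2
  obtain ⟨hb1', hb1''⟩ := abs_le.1 hb1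
  obtain ⟨hb2', hb2''⟩ := abs_le.1 hb2
  obtain ⟨hq1', hq1''⟩ := abs_le.1 hq1
  obtain ⟨hq2', hq2''⟩ := abs_le.1 hq2
  have hEt2 : E*t^2 ≤ t := by nlinarith
  have hEt3 : E*t^3 ≤ t^2/100 := by nlinarith [sq_nonneg t]
  have habs : ∀ x : ℝ, x^2 ≤ t^2 → |x| ≤ t := fun x hx => by
    have h1 := Real.sqrt_le_sqrt hx
    rwa [Real.sqrt_sq_eq_abs, Real.sqrt_sq ht.le] at h1
  have hz0a : |z0| ≤ t := habs z0 (by nlinarith [sq_nonneg z1])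
  have hz1a : |z1| ≤ t := habs z1 (by nlinarith [sq_nonneg z0])
  obtain ⟨hz0l, hz0u⟩ := abs_le.1 hz0a
  obtain ⟨hz1l, hz1u⟩ := abs_le.1 hz1a
  have hm2 : m^2 ≤ 2*t^2 := by nlinarith
  have ha1p : |a1 + z0| ≤ 3*t := abs_le.2 ⟨by linarith, by linarith⟩
  have ha2p : |a2 + z1| ≤ 3*t := abs_le.2 ⟨by linarith, by linarith⟩
  have hS : |q1+q2+(b1-1)+(b2-1)| ≤ 4*(E*t) := abs_le.2 ⟨by linarith, by linarith⟩
  have hP1 : |(q1+q2+(b1-1)+(b2-1))*m^2| ≤ 8*E*t^3 := by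
    rw [abs_mul, abs_of_nonneg (sq_nonneg m)]
    calc |q1+q2+(b1-1)+(b2-1)| * m^2 ≤ (4*(E*t)) * (2*t^2) :=
          mul_le_mul hS hm2 (sq_nonneg m) (by positivity)
      _ = 8*E*t^3 := by ring
  have hP2 : |(a1-z0)*(a1+z0)| ≤ 3*E*t^3 := by
    rw [abs_mul]
    calc |a1-z0| * |a1+z0| ≤ (E*t^2) * (3*t) :=
          mul_le_mul ha1 ha1p (abs_nonneg _) (by positivity)
      _ = 3*E*t^3 := by ring
  have hP3 : |(a2-z1)*(a2+z1)| ≤ 3*E*t^3 := by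
    rw [abs_mul]
    calc |a2-z1| * |a2+z1| ≤ (E*t^2) * (3*t) :=
          mul_le_mul ha2 ha2p (abs_nonneg _) (by positivity)
      _ = 3*E*t^3 := by ring
  obtain ⟨hP1', hP1''⟩ := abs_le.1 hP1
  obtain ⟨hP2', hP2''⟩ := abs_le.1 hP2
  obtain ⟨hP3', hP3''⟩ := abs_le.1 hP3
  have key : (q1+q2+b1+b2)*m^2 - 2*(a1^2+a2^2) =
      (q1+q2+(b1-1)+(b2-1))*m^2 + 2*(m^2-t^2)
      - 2*((a1-z0)*(a1+z0)) - 2*((a2-z1)*(a2+z1)) := by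
    linear_combination (-2:ℝ) * hsq
  have key2 : (q1+q2+b1+b2)*m^2 - (a1^2+a2^2) =
      (q1+q2+(b1-1)+(b2-1))*m^2 + 2*(m^2-t^2) + t^2
      - ((a1-z0)*(a1+z0)) - ((a2-z1)*(a2+z1)) := by
    linear_combination (-1:ℝ) * hsq
  constructor
  · rw [key]
    exact abs_le.2 ⟨by linarith, by linarith⟩
  · rw [key2]; linarith

/-! #### Euclidean space facts -/

lemma norm_sq_two (w : E2) : ‖w‖^2 = (w 0)^2 + (w 1)^2 := by
  rw [← real_inner_self_eq_norm_sq]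
  simp only [PiLp.inner_apply, Fin.sum_univ_two, RCLike.inner_apply, conj_trivial]; ring

lemma inner_single_single' {n : ℕ} (i j : Fin n) (a b : ℝ) (hij : i ≠ j) :
    (⟪EuclideanSpace.single i a, EuclideanSpace.single j b⟫ : ℝ) = 0 := by
  simp [EuclideanSpace.inner_single_left, EuclideanSpace.single_apply, hij.symm]

lemma inner_single_same {n : ℕ} (i : Fin n) (a b : ℝ) :
    (⟪EuclideanSpace.single i a, EuclideanSpace.single i b⟫ : ℝ) = a * b := by
  simp [EuclideanSpace.inner_single_left, EuclideanSpace.single_apply]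

lemma iota_norm {n : ℕ} (i j : Fin n) (hij : i ≠ j) (a b : ℝ) :
    ‖EuclideanSpace.single i a + EuclideanSpace.single j b‖^2 = a^2 + b^2 := by
  rw [← real_inner_self_eq_norm_sq]
  rw [inner_add_add_self]
  rw [inner_single_same, inner_single_single' _ _ _ _ hij, inner_single_same,
    inner_single_single' _ _ _ _ hij.symm]
  ring

lemma iota_norm_eq {n : ℕ} (i j : Fin n) (hij : i ≠ j) (w : E2) :
    ‖EuclideanSpace.single i (w 0) + EuclideanSpace.single j (w 1)‖ = ‖w‖ := by
  have h1 := iota_norm i j hij (w 0) (w 1)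
  have h2 := norm_sq_two w
  nlinarith [norm_nonneg (EuclideanSpace.single i (w 0) + EuclideanSpace.single j (w 1)),
    norm_nonneg w]

/-! #### The Laplacian evaluation lemma -/

lemma lapW_eval (f : E2 → ℝ) (P : E2 → (E2 →L[ℝ] ℝ)) (ζ : E2)
    (hζ : ζ ∈ ball (0 : E2) 1 \ {0})
    (hf : ∀ᶠ w in nhds ζ, HasFDerivAt f (P w) w)
    (hf2 : ContDiffAt ℝ 2 f ζ) :
    lapW (ball 0 1 \ {0}) f ζ =
      fderiv ℝ (fun w => P w e₁) ζ e₁ + fderiv ℝ (fun w => P w e₂) ζ e₂ := by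
  have hsop : IsOpen (ball (0 : E2) 1 \ {0}) := isOpen_ball.sdiff isClosed_singleton
  have hdfP : fderiv ℝ f =ᶠ[nhds ζ] P := hf.mono fun w hw => hw.fderiv
  have hdiff : DifferentiableAt ℝ (fderiv ℝ f) ζ := by
    have := hf2.fderiv_right (m := 1) le_rfl
    exact this.differentiableAt one_ne_zero
  have hPdiff : DifferentiableAt ℝ P ζ :=
    (Filter.EventuallyEq.differentiableAt_iff hdfP).1 hdiff
  have key : ∀ e : E2,
      iteratedFDerivWithin ℝ 2 f (ball 0 1 \ {0}) ζ ![e, e] =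
      fderiv ℝ (fun w => P w e) ζ e := by
    intro e
    rw [iteratedFDerivWithin_of_isOpen 2 hsop hζ, iteratedFDeriv_two_apply]
    have h2 : fderiv ℝ (fderiv ℝ f) ζ = fderiv ℝ P ζ := hdfP.fderiv_eq
    have h3 : fderiv ℝ (fun w => P w e) ζ = (fderiv ℝ P ζ).flip e := by
      rw [fderiv_clm_apply hPdiff (differentiableAt_const e)]
      simp
    simp only [Matrix.cons_val_zero, Matrix.cons_val_one, Matrix.head_cons]
    rw [h2, h3]
    rfl
  unfold lapW
  rw [key e₁, key e₂]

/-! #### First derivatives -/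

def Gm {n : ℕ} (u : E2 → En n) (w : E2) : E2 →L[ℝ] ℝ :=
  ((innerSL ℝ) (u w)).comp (fderiv ℝ u w)

lemma Gm_apply {n : ℕ} (u : E2 → En n) (w v : E2) :
    Gm u w v = ⟪u w, fderiv ℝ u w v⟫ := rfl

def PlogF {n : ℕ} (u : E2 → En n) (w : E2) : E2 →L[ℝ] ℝ := (‖u w‖^2)⁻¹ • Gm u w
def PnF {n : ℕ} (u : E2 → En n) (w : E2) : E2 →L[ℝ] ℝ := (‖u w‖)⁻¹ • Gm u w

lemma hasFDerivAt_phi {n : ℕ} (u : E2 → En n) (w : E2)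
    (hw : HasFDerivAt u (fderiv ℝ u w) w) :
    HasFDerivAt (fun x => ‖u x‖^2 : E2 → ℝ) ((2:ℝ) • Gm u w) w := by
  have h1 : HasFDerivAt (fun x => ⟪u x, u x⟫ : E2 → ℝ)
      ((fderivInnerCLM ℝ (u w, u w)).comp ((fderiv ℝ u w).prod (fderiv ℝ u w))) w :=
    hw.inner ℝ hw
  have h2 : (fun x => ⟪u x, u x⟫ : E2 → ℝ) = fun x => ‖u x‖^2 := by
    funext x; exact real_inner_self_eq_norm_sq _
  rw [h2] at h1
  refine h1.congr_fderiv ?_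
  ext v
  simp [fderivInnerCLM_apply, Gm_apply, two_smul]
  exact Finset.sum_congr rfl fun i _ => mul_comm _ _

lemma hasFDerivAt_log_norm {n : ℕ} (u : E2 → En n) (w : E2)
    (hw : HasFDerivAt u (fderiv ℝ u w) w) (h0 : u w ≠ 0) :
    HasFDerivAt (fun x => Real.log ‖u x‖) (PlogF u w) w := by
  have hφ0 : ‖u w‖^2 ≠ 0 := pow_ne_zero _ (norm_ne_zero_iff.2 h0)
  have h1 := ((hasFDerivAt_phi u w hw).log hφ0).const_mul (1/2 : ℝ)
  have h2 : (fun x => (1/2 : ℝ) * Real.log (‖u x‖^2)) = fun x => Real.log ‖u x‖ := by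
    funext x; rw [Real.log_pow]; push_cast; ring
  rw [h2] at h1
  refine h1.congr_fderiv ?_
  ext v
  simp only [ContinuousLinearMap.smul_apply, PlogF, smul_eq_mul]
  ring

lemma hasFDerivAt_norm_u {n : ℕ} (u : E2 → En n) (w : E2)
    (hw : HasFDerivAt u (fderiv ℝ u w) w) (h0 : u w ≠ 0) :
    HasFDerivAt (fun x => ‖u x‖) (PnF u w) w := by
  have hφ0 : ‖u w‖^2 ≠ 0 := pow_ne_zero _ (norm_ne_zero_iff.2 h0)
  have h1 := (Real.hasDerivAt_sqrt hφ0).comp_hasFDerivAt w (hasFDerivAt_phi u w hw)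
  have h2 : (fun x => Real.sqrt (‖u x‖^2)) = fun x => ‖u x‖ := by
    funext x; exact Real.sqrt_sq (norm_nonneg _)
  rw [show ((fun x => √x) ∘ fun x => ‖u x‖ ^ 2) = fun x => √(‖u x‖^2) from rfl, h2] at h1
  refine h1.congr_fderiv ?_
  ext v
  rw [Real.sqrt_sq (norm_nonneg _)] at *
  simp only [ContinuousLinearMap.smul_apply, PnF, smul_eq_mul]
  field_simp

/-! #### Second derivatives in a given direction -/

lemma hasFDerivAt_Ue {n : ℕ} (u : E2 → En n) (ζ : E2) (e : E2)
    (hU : HasFDerivAt (fderiv ℝ u) (fderiv ℝ (fderiv ℝ u) ζ) ζ) :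
    HasFDerivAt (fun w => fderiv ℝ u w e)
      ((fderiv ℝ u ζ).comp (0 : E2 →L[ℝ] E2) + (fderiv ℝ (fderiv ℝ u) ζ).flip e) ζ :=
  hU.clm_apply (hasFDerivAt_const e ζ)

lemma hasFDerivAt_Ne {n : ℕ} (u : E2 → En n) (ζ : E2) (e : E2)
    (hw : HasFDerivAt u (fderiv ℝ u ζ) ζ)
    (hU : HasFDerivAt (fderiv ℝ u) (fderiv ℝ (fderiv ℝ u) ζ) ζ) :
    ∃ D : E2 →L[ℝ] ℝ, HasFDerivAt (fun w => (⟪u w, fderiv ℝ u w e⟫ : ℝ)) D ζ ∧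
      D e = ⟪u ζ, fderiv ℝ (fderiv ℝ u) ζ e e⟫ + ‖fderiv ℝ u ζ e‖^2 := by
  refine ⟨_, hw.inner ℝ (hasFDerivAt_Ue u ζ e hU), ?_⟩
  simp only [ContinuousLinearMap.comp_apply, ContinuousLinearMap.prod_apply,
    fderivInnerCLM_apply, ContinuousLinearMap.add_apply, ContinuousLinearMap.flip_apply,
    ContinuousLinearMap.zero_apply, map_zero, zero_add]
  rw [real_inner_self_eq_norm_sq]

lemma second_log {n : ℕ} (u : E2 → En n) (ζ : E2) (e : E2)
    (hw : HasFDerivAt u (fderiv ℝ u ζ) ζ)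
    (hU : HasFDerivAt (fderiv ℝ u) (fderiv ℝ (fderiv ℝ u) ζ) ζ)
    (h0 : u ζ ≠ 0) :
    ∃ D : E2 →L[ℝ] ℝ, HasFDerivAt (fun w => PlogF u w e) D ζ ∧
      D e = (‖u ζ‖^2)⁻¹ * (⟪u ζ, fderiv ℝ (fderiv ℝ u) ζ e e⟫ + ‖fderiv ℝ u ζ e‖^2)
        - 2 * (⟪u ζ, fderiv ℝ u ζ e⟫ : ℝ)^2 * ((‖u ζ‖^2)^2)⁻¹ := by
  have hφ0 : ‖u ζ‖^2 ≠ 0 := pow_ne_zero _ (norm_ne_zero_iff.2 h0)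
  obtain ⟨DN, hDN, hDNe⟩ := hasFDerivAt_Ne u ζ e hw hU
  have hφ : HasFDerivAt (fun x => ‖u x‖^2 : E2 → ℝ) ((2:ℝ) • Gm u ζ) ζ :=
    hasFDerivAt_phi u ζ hw
  have hinv := (hasDerivAt_inv hφ0).comp_hasFDerivAt ζ hφ
  have hfun : (fun w => PlogF u w e) = fun w => (‖u w‖^2)⁻¹ * ⟪u w, fderiv ℝ u w e⟫ := rfl
  have hmul := hinv.mul hDN
  refine ⟨_, (by rw [hfun]; exact hmul), ?_⟩
  simp only [ContinuousLinearMap.add_apply, ContinuousLinearMap.smul_apply, smul_eq_mul,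
    ContinuousLinearMap.neg_apply]
  rw [hDNe]
  have hGe : Gm u ζ e = (⟪u ζ, fderiv ℝ u ζ e⟫ : ℝ) := rfl
  simp only [hGe, Function.comp_apply]
  ring

lemma second_norm {n : ℕ} (u : E2 → En n) (ζ : E2) (e : E2)
    (hw : HasFDerivAt u (fderiv ℝ u ζ) ζ)
    (hU : HasFDerivAt (fderiv ℝ u) (fderiv ℝ (fderiv ℝ u) ζ) ζ)
    (h0 : u ζ ≠ 0) :
    ∃ D : E2 →L[ℝ] ℝ, HasFDerivAt (fun w => PnF u w e) D ζ ∧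
      D e = (‖u ζ‖)⁻¹ * (⟪u ζ, fderiv ℝ (fderiv ℝ u) ζ e e⟫ + ‖fderiv ℝ u ζ e‖^2)
        - (⟪u ζ, fderiv ℝ u ζ e⟫ : ℝ)^2 * (‖u ζ‖^3)⁻¹ := by
  have hm0 : ‖u ζ‖ ≠ 0 := norm_ne_zero_iff.2 h0
  obtain ⟨DN, hDN, hDNe⟩ := hasFDerivAt_Ne u ζ e hw hU
  have hnrm : HasFDerivAt (fun x => ‖u x‖) (PnF u ζ) ζ := hasFDerivAt_norm_u u ζ hw h0
  have hinv := (hasDerivAt_inv hm0).comp_hasFDerivAt ζ hnrm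
  have hfun : (fun w => PnF u w e) = fun w => (‖u w‖)⁻¹ * ⟪u w, fderiv ℝ u w e⟫ := rfl
  have hmul := hinv.mul hDN
  refine ⟨_, (by rw [hfun]; exact hmul), ?_⟩
  simp only [ContinuousLinearMap.add_apply, ContinuousLinearMap.smul_apply, smul_eq_mul,
    ContinuousLinearMap.neg_apply]
  rw [hDNe]
  have hGe : (PnF u ζ) e = (‖u ζ‖)⁻¹ * (⟪u ζ, fderiv ℝ u ζ e⟫ : ℝ) := rfl
  rw [hGe]
  simp only [Function.comp_apply]
  field_simp
  ring

end Stmt13Aux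
set_option maxHeartbeats 2000000 in
open Stmt13Aux in
/-- If `u : D → ℝⁿ` is `C²`, `u(0) = 0`, `du(0)` injective, and
`u(ζ) = (ξ,η,0,…,0) + O(|ζ|²)`, then `Δ(log|u|)(ζ) = O(1/|ζ|)` as `ζ → 0`; consequently
for `A` large enough `Δ(log|u| + A|u|) ≥ 0` on a punctured neighborhood of `0`. -/
theorem stmt13 {n : ℕ} (hn : 2 ≤ n)
    (u : EuclideanSpace ℝ (Fin 2) → EuclideanSpace ℝ (Fin n))
    (hu : ContDiffOn ℝ 2 u (ball 0 1)) (hu0 : u 0 = 0)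
    (hinj : Function.Injective (fderivWithin ℝ u (ball 0 1) 0))
    (hO : ∃ C₀ : ℝ, ∀ ζ ∈ ball (0 : EuclideanSpace ℝ (Fin 2)) 1,
      ‖u ζ - (EuclideanSpace.single (⟨0, by omega⟩ : Fin n) (ζ 0) +
        EuclideanSpace.single (⟨1, by omega⟩ : Fin n) (ζ 1))‖ ≤ C₀ * ‖ζ‖ ^ 2)
    (hdu : fderivWithin ℝ u (ball 0 1) 0 e₁ = EuclideanSpace.single (⟨0, by omega⟩ : Fin n) 1 ∧
      fderivWithin ℝ u (ball 0 1) 0 e₂ = EuclideanSpace.single (⟨1, by omega⟩ : Fin n) 1) :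
    (∃ C > 0, ∃ r₀ > 0, ∀ ζ : EuclideanSpace ℝ (Fin 2), ζ ≠ 0 → ‖ζ‖ < r₀ →
      |lapW (ball 0 1 \ {0}) (fun w => Real.log ‖u w‖) ζ| ≤ C / ‖ζ‖) ∧
    (∃ A₀ : ℝ, ∀ A : ℝ, A₀ ≤ A → ∃ r₁ > 0,
      ∀ ζ : EuclideanSpace ℝ (Fin 2), ζ ≠ 0 → ‖ζ‖ < r₁ →
        0 ≤ lapW (ball 0 1 \ {0}) (fun w => Real.log ‖u w‖ + A * ‖u w‖) ζ) := by
  obtain ⟨hdu1, hdu2⟩ := hdu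
  obtain ⟨C₀', hC₀'⟩ := hO
  have hi01 : (⟨0, by omega⟩ : Fin n) ≠ (⟨1, by omega⟩ : Fin n) := by
    simp [Fin.ext_iff]
  set C₀ : ℝ := max C₀' 1 with hC₀def
  have hC₀1 : (1:ℝ) ≤ C₀ := le_max_right _ _
  have hC₀ : ∀ ζ ∈ ball (0 : EuclideanSpace ℝ (Fin 2)) 1,
      ‖u ζ - (EuclideanSpace.single (⟨0, by omega⟩ : Fin n) (ζ 0) +
        EuclideanSpace.single (⟨1, by omega⟩ : Fin n) (ζ 1))‖ ≤ C₀ * ‖ζ‖ ^ 2 := by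
    intro ζ hζ
    exact (hC₀' ζ hζ).trans
      (mul_le_mul_of_nonneg_right (le_max_left _ _) (sq_nonneg _))
  have hB : IsOpen (ball (0 : EuclideanSpace ℝ (Fin 2)) 1) := isOpen_ball
  have h0B : (0 : EuclideanSpace ℝ (Fin 2)) ∈ ball (0 : EuclideanSpace ℝ (Fin 2)) 1 :=
    mem_ball_self one_pos
  have hud : ∀ w ∈ ball (0 : EuclideanSpace ℝ (Fin 2)) 1, HasFDerivAt u (fderiv ℝ u w) w :=
    fun w hw =>
      ((hu.differentiableOn (by norm_num)).differentiableAt (hB.mem_nhds hw)).hasFDerivAt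
  have hUc : ContDiffOn ℝ 1 (fderiv ℝ u) (ball (0 : EuclideanSpace ℝ (Fin 2)) 1) :=
    hu.fderiv_of_isOpen hB le_rfl
  have hU'd : ∀ w ∈ ball (0 : EuclideanSpace ℝ (Fin 2)) 1,
      HasFDerivAt (fderiv ℝ u) (fderiv ℝ (fderiv ℝ u) w) w := fun w hw =>
    ((hUc.differentiableOn one_ne_zero).differentiableAt (hB.mem_nhds hw)).hasFDerivAt
  have hU'cont : ContinuousOn (fderiv ℝ (fderiv ℝ u)) (ball (0 : EuclideanSpace ℝ (Fin 2)) 1) :=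
    hUc.continuousOn_fderiv_of_isOpen hB le_rfl
  set M : ℝ := ‖fderiv ℝ (fderiv ℝ u) 0‖ + 1 with hMdef
  have hM1 : (1:ℝ) ≤ M := le_add_of_nonneg_left (by positivity)
  obtain ⟨δ, hδpos, hδ⟩ :=
    (Metric.continuousAt_iff (f := fderiv ℝ (fderiv ℝ u)) (a := 0)).1 (hU'cont.continuousAt (hB.mem_nhds h0B)) 1 one_pos
  set rM : ℝ := min δ 1 with hrMdef
  have hrMpos : 0 < rM := lt_min hδpos one_pos
  have hrM1 : rM ≤ 1 := min_le_right _ _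
  have hrMB : ball (0 : EuclideanSpace ℝ (Fin 2)) rM ⊆ ball 0 1 := ball_subset_ball hrM1
  have hMb : ∀ w ∈ ball (0 : EuclideanSpace ℝ (Fin 2)) rM, ‖fderiv ℝ (fderiv ℝ u) w‖ ≤ M := by
    intro w hw
    have h1 : dist w 0 < δ := lt_of_lt_of_le (mem_ball.1 hw) (min_le_left _ _)
    have h2 := hδ h1
    rw [dist_eq_norm (fderiv ℝ (fderiv ℝ u) w)] at h2
    have h3 : ‖fderiv ℝ (fderiv ℝ u) w‖ - ‖fderiv ℝ (fderiv ℝ u) 0‖ ≤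
        ‖fderiv ℝ (fderiv ℝ u) w - fderiv ℝ (fderiv ℝ u) 0‖ :=
          norm_sub_norm_le (fderiv ℝ (fderiv ℝ u) w) (fderiv ℝ (fderiv ℝ u) 0)
    linarith
  have hLip : ∀ w ∈ ball (0 : EuclideanSpace ℝ (Fin 2)) rM,
      ‖fderiv ℝ u w - fderiv ℝ u 0‖ ≤ M * ‖w‖ := by
    intro w hw
    have h := (convex_ball (0 : EuclideanSpace ℝ (Fin 2)) rM).norm_image_sub_le_of_norm_hasFDerivWithin_le
      (fun x hx => (hU'd x (hrMB hx)).hasFDerivWithinAt) (fun x hx => hMb x hx)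
      (mem_ball_self hrMpos) hw
    simpa using h
  have hU0e1 : fderiv ℝ u 0 e₁ = EuclideanSpace.single (⟨0, by omega⟩ : Fin n) 1 := by
    rw [← fderivWithin_of_isOpen hB h0B]; exact hdu1
  have hU0e2 : fderiv ℝ u 0 e₂ = EuclideanSpace.single (⟨1, by omega⟩ : Fin n) 1 := by
    rw [← fderivWithin_of_isOpen hB h0B]; exact hdu2
  set E : ℝ := 3*C₀ + 3*M + 1 with hEdef
  have hE1 : (1:ℝ) ≤ E := by linarith
  have hEpos : (0:ℝ) < E := by linarith
  set r : ℝ := min rM (1/(100*E)) with hrdef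
  have hrpos : 0 < r := lt_min hrMpos (by positivity)
  have hr1 : r ≤ 1 := le_trans (min_le_left _ _) hrM1
  -- the master estimate
  have key : ∀ ζ : EuclideanSpace ℝ (Fin 2), ζ ≠ 0 → ‖ζ‖ < r →
      (|lapW (ball 0 1 \ {0}) (fun w => Real.log ‖u w‖) ζ| ≤ (640*E) / ‖ζ‖) ∧
      (∀ A : ℝ, 10240 * E ≤ A →
        0 ≤ lapW (ball 0 1 \ {0}) (fun w => Real.log ‖u w‖ + A * ‖u w‖) ζ) := by
    intro ζ hζ0 hζr
    have htpos : 0 < ‖ζ‖ := norm_pos_iff.2 hζ0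
    have hζB : ζ ∈ ball (0 : EuclideanSpace ℝ (Fin 2)) 1 :=
      mem_ball_zero_iff.2 (lt_of_lt_of_le hζr hr1)
    have hζrM : ζ ∈ ball (0 : EuclideanSpace ℝ (Fin 2)) rM :=
      mem_ball_zero_iff.2 (lt_of_lt_of_le hζr (min_le_left _ _))
    have hζs : ζ ∈ ball (0 : EuclideanSpace ℝ (Fin 2)) 1 \ {0} := ⟨hζB, by simp [hζ0]⟩
    have htr : ‖ζ‖ ≤ 1/(100*E) := le_of_lt (lt_of_lt_of_le hζr (min_le_right _ _))
    have hEt : E * ‖ζ‖ ≤ 1/100 := by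
      have h1 : E * ‖ζ‖ ≤ E * (1/(100*E)) := mul_le_mul_of_nonneg_left htr hEpos.le
      have h2 : E * (1/(100*E)) = 1/100 := by field_simp
      linarith
    have hC₀E : C₀ ≤ E := by linarith
    have hME : 3*M ≤ E := by linarith
    have hC₀t' : C₀ * ‖ζ‖ ≤ 1/100 :=
      le_trans (mul_le_mul_of_nonneg_right hC₀E (norm_nonneg ζ)) hEt
    have hC₀t : C₀ * ‖ζ‖^2 ≤ ‖ζ‖/100 := by
      nlinarith [mul_le_mul_of_nonneg_right hC₀t' (norm_nonneg ζ)]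
    have hMt : M * ‖ζ‖ ≤ 1/100 :=
      le_trans (mul_le_mul_of_nonneg_right (by linarith : M ≤ E) (norm_nonneg ζ)) hEt
    -- norm comparison with the injection ι
    have hub : ‖u ζ - (EuclideanSpace.single (⟨0, by omega⟩ : Fin n) (ζ 0) +
        EuclideanSpace.single (⟨1, by omega⟩ : Fin n) (ζ 1))‖ ≤ C₀ * ‖ζ‖^2 := hC₀ ζ hζB
    have hvt : ‖EuclideanSpace.single (⟨0, by omega⟩ : Fin n) (ζ 0) +
        EuclideanSpace.single (⟨1, by omega⟩ : Fin n) (ζ 1)‖ = ‖ζ‖ :=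
      iota_norm_eq _ _ hi01 ζ
    have hmt : |‖u ζ‖ - ‖ζ‖| ≤ C₀ * ‖ζ‖^2 := by
      have h := (abs_norm_sub_norm_le (u ζ) _).trans hub
      rwa [hvt] at h
    obtain ⟨hmt', hmt''⟩ := abs_le.1 hmt
    have hm_lo : ‖ζ‖/2 ≤ ‖u ζ‖ := by linarith
    have hm_hi : ‖u ζ‖ ≤ 2*‖ζ‖ := by linarith
    have hmpos : 0 < ‖u ζ‖ := by linarith
    have hne : u ζ ≠ 0 := norm_pos_iff.1 hmpos
    have hm0 : ‖u ζ‖ ≠ 0 := ne_of_gt hmpos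
    -- |m² − t²| ≤ E t³
    have hm_sq : |‖u ζ‖^2 - ‖ζ‖^2| ≤ E * ‖ζ‖^3 := by
      have hfac : ‖u ζ‖^2 - ‖ζ‖^2 = (‖u ζ‖ - ‖ζ‖) * (‖u ζ‖ + ‖ζ‖) := by ring
      rw [hfac, abs_mul]
      have h1 : |‖u ζ‖ + ‖ζ‖| ≤ 3*‖ζ‖ := abs_le.2 ⟨by linarith, by linarith⟩
      calc |‖u ζ‖ - ‖ζ‖| * |‖u ζ‖ + ‖ζ‖| ≤ (C₀ * ‖ζ‖^2) * (3*‖ζ‖) :=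
            mul_le_mul hmt h1 (abs_nonneg _) (by positivity)
        _ ≤ E * ‖ζ‖^3 := by
            nlinarith [mul_le_mul_of_nonneg_right (show 3*C₀ ≤ E by linarith)
              (pow_nonneg (norm_nonneg ζ) 3)]
    -- directional estimates
    have dir : ∀ (e : EuclideanSpace ℝ (Fin 2)) (i : Fin n) (c : ℝ), ‖e‖ = 1 →
        fderiv ℝ u 0 e = EuclideanSpace.single i 1 →
        (⟪(EuclideanSpace.single (⟨0, by omega⟩ : Fin n) (ζ 0) +
          EuclideanSpace.single (⟨1, by omega⟩ : Fin n) (ζ 1)), EuclideanSpace.single i (1:ℝ)⟫ : ℝ) = c →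
        |(⟪u ζ, fderiv ℝ u ζ e⟫ : ℝ) - c| ≤ E*‖ζ‖^2 ∧
        |‖fderiv ℝ u ζ e‖^2 - 1| ≤ E*‖ζ‖ ∧
        |(⟪u ζ, fderiv ℝ (fderiv ℝ u) ζ e e⟫ : ℝ)| ≤ E*‖ζ‖ := by
      intro e i c he hU0 hc
      have hUe_lip : ‖fderiv ℝ u ζ e - fderiv ℝ u 0 e‖ ≤ M*‖ζ‖ := by
        have h1 : ‖(fderiv ℝ u ζ - fderiv ℝ u 0) e‖ ≤ ‖fderiv ℝ u ζ - fderiv ℝ u 0‖ * ‖e‖ :=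
          ContinuousLinearMap.le_opNorm _ _
        rw [ContinuousLinearMap.sub_apply, he, mul_one] at h1
        exact h1.trans (hLip ζ hζrM)
      have hU0en : ‖fderiv ℝ u 0 e‖ = 1 := by
        rw [hU0, EuclideanSpace.norm_single, norm_one]
      have hUen1 : |‖fderiv ℝ u ζ e‖ - 1| ≤ M*‖ζ‖ := by
        rw [← hU0en]
        exact (abs_norm_sub_norm_le _ _).trans hUe_lip
      obtain ⟨hUen1', hUen1''⟩ := abs_le.1 hUen1
      have hUen_le : ‖fderiv ℝ u ζ e‖ ≤ 2 := by
        have := hUen1''.trans hMt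
        linarith [this]
      refine ⟨?_, ?_, ?_⟩
      · -- a-estimate
        have hsplit : (⟪u ζ, fderiv ℝ u ζ e⟫ : ℝ) - c =
            ⟪u ζ - (EuclideanSpace.single (⟨0, by omega⟩ : Fin n) (ζ 0) +
              EuclideanSpace.single (⟨1, by omega⟩ : Fin n) (ζ 1)), fderiv ℝ u ζ e⟫ +
            ⟪(EuclideanSpace.single (⟨0, by omega⟩ : Fin n) (ζ 0) +
              EuclideanSpace.single (⟨1, by omega⟩ : Fin n) (ζ 1)),
              fderiv ℝ u ζ e - fderiv ℝ u 0 e⟫ := by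
          rw [inner_sub_left, inner_sub_right]
          have : (⟪(EuclideanSpace.single (⟨0, by omega⟩ : Fin n) (ζ 0) +
              EuclideanSpace.single (⟨1, by omega⟩ : Fin n) (ζ 1)), fderiv ℝ u 0 e⟫ : ℝ) = c := by
            rw [hU0]; exact hc
          rw [this]; ring
        rw [hsplit]
        have h1 : |(⟪u ζ - (EuclideanSpace.single (⟨0, by omega⟩ : Fin n) (ζ 0) +
            EuclideanSpace.single (⟨1, by omega⟩ : Fin n) (ζ 1)), fderiv ℝ u ζ e⟫ : ℝ)| ≤
            (C₀*‖ζ‖^2) * 2 := by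
          refine (abs_real_inner_le_norm _ _).trans ?_
          exact mul_le_mul hub hUen_le (norm_nonneg _) (by positivity)
        have h2 : |(⟪(EuclideanSpace.single (⟨0, by omega⟩ : Fin n) (ζ 0) +
            EuclideanSpace.single (⟨1, by omega⟩ : Fin n) (ζ 1)),
            fderiv ℝ u ζ e - fderiv ℝ u 0 e⟫ : ℝ)| ≤ ‖ζ‖ * (M*‖ζ‖) := by
          refine (abs_real_inner_le_norm _ _).trans ?_
          rw [hvt]
          exact mul_le_mul_of_nonneg_left hUe_lip (norm_nonneg _)
        refine (abs_add_le _ _).trans ?_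
        nlinarith [mul_le_mul_of_nonneg_right (show 2*C₀+M ≤ E by linarith) (sq_nonneg ‖ζ‖)]
      · -- b-estimate
        have hfac : ‖fderiv ℝ u ζ e‖^2 - 1 =
            (‖fderiv ℝ u ζ e‖ - 1) * (‖fderiv ℝ u ζ e‖ + 1) := by ring
        rw [hfac, abs_mul]
        have h1 : |‖fderiv ℝ u ζ e‖ + 1| ≤ 3 :=
          abs_le.2 ⟨by linarith [norm_nonneg (fderiv ℝ u ζ e)], by linarith⟩
        calc |‖fderiv ℝ u ζ e‖ - 1| * |‖fderiv ℝ u ζ e‖ + 1| ≤ (M*‖ζ‖) * 3 :=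
              mul_le_mul hUen1 h1 (abs_nonneg _) (by positivity)
          _ ≤ E*‖ζ‖ := by
              nlinarith [mul_le_mul_of_nonneg_right (show 3*M ≤ E by linarith) (norm_nonneg ζ)]
      · -- q-estimate
        have h1 : ‖fderiv ℝ (fderiv ℝ u) ζ e e‖ ≤ M := by
          calc ‖fderiv ℝ (fderiv ℝ u) ζ e e‖ ≤ ‖fderiv ℝ (fderiv ℝ u) ζ e‖ * ‖e‖ :=
                ContinuousLinearMap.le_opNorm _ _
            _ ≤ (‖fderiv ℝ (fderiv ℝ u) ζ‖ * ‖e‖) * ‖e‖ :=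
                mul_le_mul_of_nonneg_right (ContinuousLinearMap.le_opNorm _ _) (norm_nonneg _)
            _ = ‖fderiv ℝ (fderiv ℝ u) ζ‖ := by rw [he]; ring
            _ ≤ M := hMb ζ hζrM
        calc |(⟪u ζ, fderiv ℝ (fderiv ℝ u) ζ e e⟫ : ℝ)| ≤ ‖u ζ‖ * ‖fderiv ℝ (fderiv ℝ u) ζ e e‖ :=
              abs_real_inner_le_norm _ _
          _ ≤ (2*‖ζ‖) * M := mul_le_mul hm_hi h1 (norm_nonneg _) (by positivity)
          _ ≤ E*‖ζ‖ := by
              nlinarith [mul_le_mul_of_nonneg_right (show 2*M ≤ E by linarith) (norm_nonneg ζ)]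
    have he1 : ‖e₁‖ = 1 := by rw [e₁, EuclideanSpace.norm_single, norm_one]
    have he2 : ‖e₂‖ = 1 := by rw [e₂, EuclideanSpace.norm_single, norm_one]
    have hic1 : (⟪(EuclideanSpace.single (⟨0, by omega⟩ : Fin n) (ζ 0) +
        EuclideanSpace.single (⟨1, by omega⟩ : Fin n) (ζ 1)),
        EuclideanSpace.single (⟨0, by omega⟩ : Fin n) (1:ℝ)⟫ : ℝ) = ζ 0 := by
      rw [inner_add_left, inner_single_same, inner_single_single' _ _ _ _ hi01.symm]
      ring
    have hic2 : (⟪(EuclideanSpace.single (⟨0, by omega⟩ : Fin n) (ζ 0) +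
        EuclideanSpace.single (⟨1, by omega⟩ : Fin n) (ζ 1)),
        EuclideanSpace.single (⟨1, by omega⟩ : Fin n) (1:ℝ)⟫ : ℝ) = ζ 1 := by
      rw [inner_add_left, inner_single_same, inner_single_single' _ _ _ _ hi01]
      ring
    obtain ⟨ha1, hb1, hq1⟩ := dir e₁ _ (ζ 0) he1 hU0e1 hic1
    obtain ⟨ha2, hb2, hq2⟩ := dir e₂ _ (ζ 1) he2 hU0e2 hic2
    -- abbreviations
    have hsq : (ζ 0)^2 + (ζ 1)^2 = ‖ζ‖^2 := (norm_sq_two ζ).symm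
    obtain ⟨hNum, hNum2⟩ := aux_bounds E ‖ζ‖ ‖u ζ‖ (ζ 0) (ζ 1)
      (⟪u ζ, fderiv ℝ u ζ e₁⟫ : ℝ) (⟪u ζ, fderiv ℝ u ζ e₂⟫ : ℝ)
      (‖fderiv ℝ u ζ e₁‖^2) (‖fderiv ℝ u ζ e₂‖^2)
      (⟪u ζ, fderiv ℝ (fderiv ℝ u) ζ e₁ e₁⟫ : ℝ) (⟪u ζ, fderiv ℝ (fderiv ℝ u) ζ e₂ e₂⟫ : ℝ)
      hE1 htpos hEt hm_sq hsq ha1 ha2 hb1 hb2 hq1 hq2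
    -- second derivative data
    obtain ⟨Dl1, hDl1, hDl1e⟩ := second_log u ζ e₁ (hud ζ hζB) (hU'd ζ hζB) hne
    obtain ⟨Dl2, hDl2, hDl2e⟩ := second_log u ζ e₂ (hud ζ hζB) (hU'd ζ hζB) hne
    obtain ⟨Dn1, hDn1, hDn1e⟩ := second_norm u ζ e₁ (hud ζ hζB) (hU'd ζ hζB) hne
    obtain ⟨Dn2, hDn2, hDn2e⟩ := second_norm u ζ e₂ (hud ζ hζB) (hU'd ζ hζB) hne
    -- eventual facts
    have hev : ∀ᶠ w in nhds ζ, w ∈ ball (0 : EuclideanSpace ℝ (Fin 2)) 1 ∧ u w ≠ 0 := by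
      have h1 : ∀ᶠ w in nhds ζ, w ∈ ball (0 : EuclideanSpace ℝ (Fin 2)) 1 :=
        Filter.eventually_of_mem (hB.mem_nhds hζB) fun w hw => hw
      have h2 : ∀ᶠ w in nhds ζ, u w ≠ 0 := (hud ζ hζB).continuousAt.eventually_ne hne
      exact h1.and h2
    have hcu2 : ContDiffAt ℝ 2 u ζ := hu.contDiffAt (hB.mem_nhds hζB)
    have hcn : ContDiffAt ℝ 2 (fun w => ‖u w‖) ζ := hcu2.norm ℝ hne
    have hclog : ContDiffAt ℝ 2 (fun w => Real.log ‖u w‖) ζ :=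
      hcn.log (norm_ne_zero_iff.2 hne)
    -- Laplacian of log ‖u‖
    have hlap_log : lapW (ball 0 1 \ {0}) (fun w => Real.log ‖u w‖) ζ = Dl1 e₁ + Dl2 e₂ := by
      rw [lapW_eval _ (PlogF u) ζ hζs
        (hev.mono fun w hw => hasFDerivAt_log_norm u w (hud w hw.1) hw.2) hclog]
      rw [hDl1.fderiv, hDl2.fderiv]
    -- estimates
    have hm4pos : 0 < ‖u ζ‖^4 := by positivity
    have hlog_val : Dl1 e₁ + Dl2 e₂ =
        (((⟪u ζ, fderiv ℝ (fderiv ℝ u) ζ e₁ e₁⟫ : ℝ) + (⟪u ζ, fderiv ℝ (fderiv ℝ u) ζ e₂ e₂⟫ : ℝ) +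
          ‖fderiv ℝ u ζ e₁‖^2 + ‖fderiv ℝ u ζ e₂‖^2) * ‖u ζ‖^2 -
          2*((⟪u ζ, fderiv ℝ u ζ e₁⟫ : ℝ)^2 + (⟪u ζ, fderiv ℝ u ζ e₂⟫ : ℝ)^2)) / ‖u ζ‖^4 := by
      rw [hDl1e, hDl2e]
      field_simp
      ring
    have hlog_bound : |Dl1 e₁ + Dl2 e₂| ≤ (640*E) / ‖ζ‖ := by
      rw [hlog_val, abs_div, abs_of_pos hm4pos]
      have hden : (‖ζ‖/2)^4 ≤ ‖u ζ‖^4 := by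
        apply pow_le_pow_left₀ (by positivity) hm_lo
      have h40 : (0:ℝ) ≤ 40*E*‖ζ‖^3 :=
        mul_nonneg (mul_nonneg (by norm_num) hEpos.le) (pow_nonneg (norm_nonneg ζ) 3)
      have ht0 : ‖ζ‖ ≠ 0 := ne_of_gt htpos
      calc _ ≤ (40*E*‖ζ‖^3) / ‖u ζ‖^4 :=
            div_le_div_of_nonneg_right hNum hm4pos.le
        _ ≤ (40*E*‖ζ‖^3) / ((‖ζ‖/2)^4) :=
            div_le_div_of_nonneg_left h40 (pow_pos (by linarith) 4) hden
        _ = (640*E) / ‖ζ‖ := by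
            field_simp
            ring
    constructor
    · rw [hlap_log]; exact hlog_bound
    · intro A hA
      have hApos : 0 ≤ A := le_trans (by linarith : (0:ℝ) ≤ 10240*E) hA
      -- Laplacian of combination
      have hlap_comb : lapW (ball 0 1 \ {0}) (fun w => Real.log ‖u w‖ + A * ‖u w‖) ζ =
          (Dl1 e₁ + Dl2 e₂) + A * (Dn1 e₁ + Dn2 e₂) := by
        have hevc : ∀ᶠ w in nhds ζ, HasFDerivAt (fun x => Real.log ‖u x‖ + A * ‖u x‖)
            (PlogF u w + A • PnF u w) w :=
          hev.mono fun w hw => (hasFDerivAt_log_norm u w (hud w hw.1) hw.2).add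
            ((hasFDerivAt_norm_u u w (hud w hw.1) hw.2).const_mul A)
        have hcc : ContDiffAt ℝ 2 (fun w => Real.log ‖u w‖ + A * ‖u w‖) ζ :=
          hclog.add (contDiffAt_const.mul hcn)
        rw [lapW_eval _ (fun w => PlogF u w + A • PnF u w) ζ hζs hevc hcc]
        have hfe : ∀ e : EuclideanSpace ℝ (Fin 2),
            (fun w => (PlogF u w + A • PnF u w) e) = fun w => PlogF u w e + A * PnF u w e := by
          intro e; funext w
          simp [ContinuousLinearMap.add_apply, ContinuousLinearMap.smul_apply]
        have hd1 : HasFDerivAt (fun w => PlogF u w e₁ + A * PnF u w e₁) (Dl1 + A • Dn1) ζ :=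
          hDl1.add (hDn1.const_mul A)
        have hd2 : HasFDerivAt (fun w => PlogF u w e₂ + A * PnF u w e₂) (Dl2 + A • Dn2) ζ :=
          hDl2.add (hDn2.const_mul A)
        rw [hfe e₁, hfe e₂, hd1.fderiv, hd2.fderiv]
        simp [ContinuousLinearMap.add_apply, ContinuousLinearMap.smul_apply]
        ring
      rw [hlap_comb]
      -- lower bound for the norm Laplacian
      have hm3pos : 0 < ‖u ζ‖^3 := by positivity
      have hn_val : Dn1 e₁ + Dn2 e₂ =
          (((⟪u ζ, fderiv ℝ (fderiv ℝ u) ζ e₁ e₁⟫ : ℝ) + (⟪u ζ, fderiv ℝ (fderiv ℝ u) ζ e₂ e₂⟫ : ℝ) +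
            ‖fderiv ℝ u ζ e₁‖^2 + ‖fderiv ℝ u ζ e₂‖^2) * ‖u ζ‖^2 -
            ((⟪u ζ, fderiv ℝ u ζ e₁⟫ : ℝ)^2 + (⟪u ζ, fderiv ℝ u ζ e₂⟫ : ℝ)^2)) / ‖u ζ‖^3 := by
        rw [hDn1e, hDn2e]
        field_simp
        ring
      have hn_lb : 1/(16*‖ζ‖) ≤ Dn1 e₁ + Dn2 e₂ := by
        rw [hn_val]
        have hden : ‖u ζ‖^3 ≤ (2*‖ζ‖)^3 := by
          apply pow_le_pow_left₀ (norm_nonneg _) hm_hi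
        have ht0 : ‖ζ‖ ≠ 0 := ne_of_gt htpos
        calc 1/(16*‖ζ‖) = (‖ζ‖^2/2) / ((2*‖ζ‖)^3) := by field_simp; ring
          _ ≤ (‖ζ‖^2/2) / ‖u ζ‖^3 :=
              div_le_div_of_nonneg_left (by positivity) hm3pos hden
          _ ≤ _ :=
              div_le_div_of_nonneg_right hNum2 hm3pos.le
      have h1 : -((640*E)/‖ζ‖) ≤ Dl1 e₁ + Dl2 e₂ := by
        have := abs_le.1 hlog_bound
        linarith [this.1]
      have h2 : (640*E)/‖ζ‖ ≤ A * (Dn1 e₁ + Dn2 e₂) := by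
        have h3 : A * (1/(16*‖ζ‖)) ≤ A * (Dn1 e₁ + Dn2 e₂) :=
          mul_le_mul_of_nonneg_left hn_lb hApos
        have h4 : (10240*E) * (1/(16*‖ζ‖)) ≤ A * (1/(16*‖ζ‖)) :=
          mul_le_mul_of_nonneg_right hA (by positivity)
        have h5 : (10240*E) * (1/(16*‖ζ‖)) = (640*E)/‖ζ‖ := by
          field_simp; ring
        linarith
      linarith
  refine ⟨⟨640*E, by linarith, r, hrpos, fun ζ h0 hr => (key ζ h0 hr).1⟩,
    ⟨10240*E, fun A hA => ⟨r, hrpos, fun ζ h0 hr => (key ζ h0 hr).2 A hA⟩⟩⟩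
end
end
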